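/- arXiv:2004.11101 — 3 statements merged into one kernel-verified Lean document; each statement's English description precedes it below -/
import Mathlib

section
/- For each real number u ≥ 2 let X_u := ⋃_{n=1}^∞ [2^{u^n}, 2^{u^n} + u^n] ⊆ ℝ. If 2 ≤ v < w are real numbers, then there is no uniformly continuous bijection from X_v onto X_w (with respect to the metric inherited from ℝ). -/
open Set

/-- The set `X_u = ⋃_{n≥1} [2^{uⁿ}, 2^{uⁿ} + uⁿ]`. -/
noncomputable def Xu (u : ℝ) : Set ℝ :=
  ⋃ n ∈ Set.Ici (1 : ℕ), Set.Icc ((2 : ℝ) ^ (u ^ n)) ((2 : ℝ) ^ (u ^ n) + u ^ n)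

noncomputable def pA (u : ℝ) (n : ℕ) : ℝ := (2:ℝ) ^ (u ^ n)
noncomputable def pB (u : ℝ) (n : ℕ) : ℝ := pA u n + u ^ n

lemma exists_isolated {E : Set ℝ} (hcl : IsClosed E) (hct : E.Countable) (hne : E.Nonempty) :
    ∃ x ∈ E, ∃ ε > 0, ∀ y ∈ E, |y - x| < ε → y = x := by
  haveI : CompleteSpace E := hcl.completeSpace_coe
  haveI := hct.to_subtype
  haveI : Nonempty E := hne.to_subtype
  have hU : (⋃ i : E, ({i} : Set E)) = univ := by
    ext x; simp
  have hd := dense_iUnion_interior_of_closed (fun i : E => isClosed_singleton (x := i)) hU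
  obtain ⟨x, hx⟩ := hd.nonempty
  obtain ⟨i, hi⟩ := mem_iUnion.mp hx
  have hnb : ({i} : Set E) ∈ nhds x :=
    Filter.mem_of_superset (mem_interior_iff_mem_nhds.mp hi) (by simp)
  have hxi : x = i := Set.mem_singleton_iff.mp (interior_subset hi)
  subst hxi
  obtain ⟨ε, εpos, hball⟩ := Metric.mem_nhds_iff.mp hnb
  refine ⟨x, x.2, ε, εpos, fun y hy hyd => ?_⟩
  have : (⟨y, hy⟩ : E) ∈ Metric.ball x ε := by
    simp [Metric.mem_ball, Subtype.dist_eq, Real.dist_eq, hyd]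
  have := hball this
  simpa using congrArg Subtype.val this

lemma two_le_pow {u : ℝ} (hu : 2 ≤ u) {n : ℕ} (hn : 1 ≤ n) : 2 ≤ u ^ n := by
  calc (2:ℝ) ≤ u := hu
  _ = u ^ 1 := (pow_one u).symm
  _ ≤ u ^ n := pow_le_pow_right₀ (by linarith) hn

lemma pow_mono' {u : ℝ} (hu : 2 ≤ u) {n k : ℕ} (h : n ≤ k) : u ^ n ≤ u ^ k :=
  pow_le_pow_right₀ (by linarith) h

lemma two_rpow_big {x : ℝ} (hx : 2 ≤ x) : 2 * x ≤ (2:ℝ) ^ x := by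
  have h1 : (2:ℝ) ^ x = (2:ℝ) ^ (2:ℝ) * (2:ℝ) ^ (x - 2) := by
    rw [← Real.rpow_add two_pos]; ring_nf
  have h2 : (2:ℝ) ^ (x - 2) = Real.exp (Real.log 2 * (x - 2)) := by
    rw [Real.rpow_def_of_pos two_pos]
  have h3 : Real.log 2 * (x - 2) + 1 ≤ Real.exp (Real.log 2 * (x - 2)) := by
    have := Real.add_one_le_exp (Real.log 2 * (x - 2)); linarith
  have h4 : (0.6931471803 : ℝ) < Real.log 2 := Real.log_two_gt_d9
  have h5 : (2:ℝ) ^ (2:ℝ) = 4 := by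
    rw [show (2:ℝ) = ((2:ℕ):ℝ) by norm_num, Real.rpow_natCast]; norm_num
  have h6 : (0:ℝ) ≤ x - 2 := by linarith
  rw [h1, h5, h2]
  nlinarith [mul_le_mul_of_nonneg_right (le_of_lt h4) h6]

lemma pA_ge_four {u : ℝ} (hu : 2 ≤ u) {n : ℕ} (hn : 1 ≤ n) : 4 ≤ pA u n := by
  have h5 : (2:ℝ) ^ (2:ℝ) = 4 := by
    rw [show (2:ℝ) = ((2:ℕ):ℝ) by norm_num, Real.rpow_natCast]; norm_num
  rw [pA, ← h5]
  exact (Real.rpow_le_rpow_left_iff (one_lt_two)).mpr (two_le_pow hu hn)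

lemma sep_succ {u : ℝ} (hu : 2 ≤ u) {n : ℕ} (hn : 1 ≤ n) : pB u n + 1 ≤ pA u (n+1) := by
  set x := u ^ n with hxdef
  have hx : 2 ≤ x := two_le_pow hu hn
  have hA4 : 4 ≤ pA u n := pA_ge_four hu hn
  have hA2x : 2 * x ≤ pA u n := two_rpow_big hx
  have hsq : pA u n * pA u n ≤ pA u (n+1) := by
    rw [pA, pA, ← Real.rpow_add two_pos]
    apply (Real.rpow_le_rpow_left_iff (x := 2) (y := x + x) (z := u ^ (n+1)) one_lt_two).mpr
    have h7 : u ^ (n+1) = u ^ n * u := pow_succ u n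
    nlinarith
  have : pB u n + 1 ≤ pA u n * pA u n := by
    rw [pB]; nlinarith
  linarith

lemma sep_gen {u : ℝ} (hu : 2 ≤ u) {n k : ℕ} (hn : 1 ≤ n) (hnk : n < k) :
    pB u n + 1 ≤ pA u k := by
  have h1 := sep_succ hu hn
  have h2 : pA u (n+1) ≤ pA u k := by
    rw [pA, pA]
    exact (Real.rpow_le_rpow_left_iff one_lt_two).mpr (pow_mono' hu hnk)
  linarith

lemma mem_Xu_iff {u x : ℝ} : x ∈ Xu u ↔ ∃ n, 1 ≤ n ∧ x ∈ Icc (pA u n) (pB u n) := by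
  simp only [Xu, mem_iUnion, mem_Ici, exists_prop, pA, pB]

lemma Icc_sub_Xu {u : ℝ} {n : ℕ} (hn : 1 ≤ n) : Icc (pA u n) (pB u n) ⊆ Xu u :=
  fun _ hx => mem_Xu_iff.mpr ⟨n, hn, hx⟩

lemma pB_mono {u : ℝ} (hu : 2 ≤ u) {n k : ℕ} (h : n ≤ k) : pB u n ≤ pB u k := by
  have h1 : pA u n ≤ pA u k := by
    rw [pA, pA]; exact (Real.rpow_le_rpow_left_iff one_lt_two).mpr (pow_mono' hu h)
  have := pow_mono' hu h
  rw [pB, pB]; linarith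

lemma gap_not_mem {u : ℝ} (hu : 2 ≤ u) {n : ℕ} (hn : 1 ≤ n) : pB u n + 1/2 ∉ Xu u := by
  intro hmem
  obtain ⟨j, hj, hjm⟩ := mem_Xu_iff.mp hmem
  rcases le_or_gt j n with h | h
  · have := pB_mono hu h
    have := hjm.2
    linarith
  · have := sep_gen hu hn h
    have := hjm.1
    linarith

lemma Icc_disj {u : ℝ} (hu : 2 ≤ u) {n k : ℕ} (hn : 1 ≤ n) (hk : 1 ≤ k) (hnk : n ≠ k)
    {x : ℝ} (h1 : x ∈ Icc (pA u n) (pB u n)) (h2 : x ∈ Icc (pA u k) (pB u k)) : False := by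
  rcases hnk.lt_or_gt with h | h
  · have := sep_gen hu hn h
    have := h1.2; have := h2.1; linarith
  · have := sep_gen hu hk h
    have := h2.2; have := h1.1; linarith

lemma connected_single {w : ℝ} (hw : 2 ≤ w) {P : Set ℝ} (hP : IsPreconnected P)
    (hPX : P ⊆ Xu w) {m k : ℕ} {p q : ℝ} (hm : 1 ≤ m) (hk : 1 ≤ k)
    (hp : p ∈ P) (hpm : p ∈ Icc (pA w m) (pB w m))
    (hq : q ∈ P) (hqk : q ∈ Icc (pA w k) (pB w k)) : m = k := by
  by_contra hne
  wlog hlt : m < k generalizing m k p q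
  · exact this hk hm hq hqk hp hpm (Ne.symm hne) ((Ne.symm hne).lt_or_gt.resolve_right hlt)
  have hsep := sep_gen hw hm hlt
  set g := pB w m + 1/2 with hg
  have hgP : g ∈ P := by
    apply hP.Icc_subset hp hq
    constructor
    · have := hpm.2; rw [hg]; linarith
    · have := hqk.1; rw [hg]; linarith
  exact gap_not_mem hw hm (hPX hgP)

/-- If `2 ≤ v < w` then there is no uniformly continuous
bijection from `X_v` onto `X_w`. -/
theorem stmt_1 (v w : ℝ) (hv : 2 ≤ v) (hvw : v < w) :
    ¬ ∃ f : ↥(Xu v) → ↥(Xu w), Function.Bijective f ∧ UniformContinuous f := by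
  rintro ⟨f, ⟨finj, fsurj⟩, hf⟩
  classical
  have hw : 2 ≤ w := hv.trans hvw.le
  have hv0 : (0:ℝ) < v := by linarith
  -- basic interval facts
  have hABv : ∀ n : ℕ, pA v n ≤ pB v n := by
    intro n; rw [pB]; have := pow_nonneg (le_of_lt hv0) n; linarith
  have hABv' : ∀ n : ℕ, pA v n < pB v n := by
    intro n; rw [pB]; have := pow_pos hv0 n; linarith
  have hABw : ∀ n : ℕ, pA w n ≤ pB w n := by
    intro n; rw [pB]; have := pow_nonneg (by linarith : (0:ℝ) ≤ w) n; linarith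
  have hABw' : ∀ n : ℕ, pA w n < pB w n := by
    intro n; rw [pB]; have := pow_pos (by linarith : (0:ℝ) < w) n; linarith
  -- the lift of f to ℝ
  set F : ℝ → ℝ := fun x => if h : x ∈ Xu v then (f ⟨x, h⟩ : ℝ) else 0 with hFdef
  have hFval : ∀ (x : ℝ) (h : x ∈ Xu v), F x = (f ⟨x, h⟩ : ℝ) := fun x h => dif_pos h
  have hFX : ∀ (x : ℝ) (h : x ∈ Xu v), F x ∈ Xu w := fun x h => by
    rw [hFval x h]; exact (f ⟨x, h⟩).2
  have hFinj : ∀ x, x ∈ Xu v → ∀ y, y ∈ Xu v → F x = F y → x = y := by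
    intro x hx y hy hxy
    rw [hFval x hx, hFval y hy] at hxy
    have := finj (Subtype.ext hxy)
    exact congrArg Subtype.val this
  have hFcont : ContinuousOn F (Xu v) := by
    rw [continuousOn_iff_continuous_restrict]
    have hres : (Xu v).restrict F = fun x => (f x : ℝ) := funext fun x => dif_pos x.2
    rw [show (Xu v).domRestrict F = (Xu v).restrict F from rfl, hres]
    exact continuous_subtype_val.comp hf.continuous
  -- uniform continuity data
  obtain ⟨δ, δpos, hδ⟩ := Metric.uniformContinuous_iff.mp hf 1 one_pos
  have hstep : ∀ x, x ∈ Xu v → ∀ y, y ∈ Xu v → |x - y| < δ → |F x - F y| < 1 := by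
    intro x hx y hy hxy
    rw [hFval x hx, hFval y hy]
    have := hδ (a := ⟨x, hx⟩) (b := ⟨y, hy⟩) (by rwa [Subtype.dist_eq, Real.dist_eq])
    rwa [Subtype.dist_eq, Real.dist_eq] at this
  -- chaining
  have chain : ∀ (k : ℕ) (n : ℕ), 1 ≤ n → ∀ x y : ℝ, x ∈ Icc (pA v n) (pB v n) →
      y ∈ Icc (pA v n) (pB v n) → x ≤ y → y - x ≤ k * (δ/2) → |F y - F x| ≤ k := by
    intro k
    induction k with
    | zero =>
      intro n hn x y hx hy hxy hle
      push_cast at hle ⊢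
      have : x = y := le_antisymm hxy (by linarith)
      simp [this]
    | succ k ih =>
      intro n hn x y hx hy hxy hle
      push_cast at hle ⊢
      by_cases hcase : y - x ≤ δ/2
      · have h1 : |F y - F x| < 1 := hstep y (Icc_sub_Xu hn hy) x (Icc_sub_Xu hn hx)
          (by rw [abs_of_nonneg (by linarith : (0:ℝ) ≤ y - x)]; linarith)
        have : (0:ℝ) ≤ k := Nat.cast_nonneg k
        linarith
      · push_neg at hcase
        set z := x + δ/2 with hz
        have hzy : z ≤ y := by rw [hz]; linarith
        have hzm : z ∈ Icc (pA v n) (pB v n) :=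
          ⟨by have := hx.1; rw [hz]; linarith, le_trans hzy hy.2⟩
        have h1 : |F z - F x| < 1 := hstep z (Icc_sub_Xu hn hzm) x (Icc_sub_Xu hn hx)
          (by rw [hz, show x + δ/2 - x = δ/2 by ring, abs_of_nonneg (by linarith : (0:ℝ) ≤ δ/2)]
              linarith)
        have h2 : |F y - F z| ≤ k := by
          have := ih n hn z y hzm hy hzy (by push_cast; rw [hz]; linarith)
          exact this
        calc |F y - F x| ≤ |F y - F z| + |F z - F x| := abs_sub_le _ _ _
        _ ≤ (k:ℝ) + 1 := by linarith
  -- diameter bound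
  have hdiam : ∀ n, 1 ≤ n → ∀ x ∈ Icc (pA v n) (pB v n), ∀ y ∈ Icc (pA v n) (pB v n),
      |F y - F x| ≤ 2/δ * v ^ n + 1 := by
    intro n hn x hx y hy
    wlog hxy : x ≤ y generalizing x y
    · rw [abs_sub_comm]; exact this y hy x hx (by linarith)
    set k := ⌈(y - x) / (δ/2)⌉₊ with hk
    have hδ2 : (0:ℝ) < δ/2 := by linarith
    have hnonneg : 0 ≤ (y - x) / (δ/2) := div_nonneg (by linarith) (le_of_lt hδ2)
    have h1 : y - x ≤ k * (δ/2) := by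
      have hle := Nat.le_ceil ((y - x) / (δ/2))
      calc y - x = (y - x) / (δ/2) * (δ/2) := by field_simp
      _ ≤ k * (δ/2) := mul_le_mul_of_nonneg_right hle (le_of_lt hδ2)
    have h2 := chain k n hn x y hx hy hxy h1
    have h3 : (k:ℝ) < (y - x)/(δ/2) + 1 := by
      exact_mod_cast Nat.ceil_lt_add_one hnonneg
    have h4 : y - x ≤ v ^ n := by
      have h5 := hx.1; have h6 := hy.2; rw [pB] at h6; linarith
    have h5 : (y - x)/(δ/2) ≤ 2/δ * v ^ n := by
      rw [div_le_iff₀ hδ2]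
      have : 2/δ * v ^ n * (δ/2) = v ^ n := by field_simp
      rw [this]; exact h4
    linarith
  -- images of the intervals
  set T : ℕ → Set ℝ := fun n => F '' Icc (pA v n) (pB v n) with hTdef
  have hTconn : ∀ n, 1 ≤ n → IsPreconnected (T n) := fun n hn =>
    isPreconnected_Icc.image F (hFcont.mono (Icc_sub_Xu hn))
  have hTcomp : ∀ n, 1 ≤ n → IsCompact (T n) := fun n hn =>
    isCompact_Icc.image_of_continuousOn (hFcont.mono (Icc_sub_Xu hn))
  have hTX : ∀ n, 1 ≤ n → T n ⊆ Xu w := by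
    rintro n hn y ⟨x, hx, rfl⟩
    exact hFX x (Icc_sub_Xu hn hx)
  have hTne : ∀ n, (T n).Nonempty := fun n =>
    ⟨F (pA v n), pA v n, ⟨le_refl _, hABv n⟩, rfl⟩
  have hTdisj : ∀ n k, 1 ≤ n → 1 ≤ k → n ≠ k → ∀ y, y ∈ T n → y ∈ T k → False := by
    rintro n k hn hk hnk y ⟨x, hx, rfl⟩ ⟨x', hx', hfx⟩
    have : x' = x := hFinj x' (Icc_sub_Xu hk hx') x (Icc_sub_Xu hn hx) hfx
    subst this
    exact Icc_disj hv hn hk hnk hx hx'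
  -- each image lies in a single codomain interval
  have hmex : ∀ n : ℕ, ∃ m : ℕ, 1 ≤ n → (1 ≤ m ∧ T n ⊆ Icc (pA w m) (pB w m)) := by
    intro n
    by_cases hn : 1 ≤ n
    · have hAin : pA v n ∈ Icc (pA v n) (pB v n) := ⟨le_refl _, hABv n⟩
      have hA : F (pA v n) ∈ Xu w := hFX _ (Icc_sub_Xu hn hAin)
      obtain ⟨m, hm1, hm2⟩ := mem_Xu_iff.mp hA
      refine ⟨m, fun _ => ⟨hm1, ?_⟩⟩
      intro y hy
      obtain ⟨x, hx, rfl⟩ := hy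
      obtain ⟨j, hj1, hj2⟩ := mem_Xu_iff.mp (hFX x (Icc_sub_Xu hn hx))
      have hjm : j = m := connected_single hw (hTconn n hn) (hTX n hn) hj1 hm1
        ⟨x, hx, rfl⟩ hj2 ⟨pA v n, hAin, rfl⟩ hm2
      rw [← hjm]; exact hj2
    · exact ⟨1, fun h => absurd h hn⟩
  choose mfun hmfun using hmex
  -- covering of codomain intervals
  have hcover : ∀ n₀, 1 ≤ n₀ → ∀ y ∈ Icc (pA w (mfun n₀)) (pB w (mfun n₀)),
      ∃ k, (1 ≤ k ∧ mfun k = mfun n₀) ∧ y ∈ T k := by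
    intro n₀ hn₀ y hy
    have hyX : y ∈ Xu w := Icc_sub_Xu (hmfun n₀ hn₀).1 hy
    obtain ⟨p, hp⟩ := fsurj ⟨y, hyX⟩
    obtain ⟨n, hn1, hn2⟩ := mem_Xu_iff.mp p.2
    have hFp : F p.1 = y := by
      rw [hFval p.1 p.2]
      exact congrArg Subtype.val hp
    have hyT : y ∈ T n := ⟨p.1, hn2, hFp⟩
    have h1 : y ∈ Icc (pA w (mfun n)) (pB w (mfun n)) := (hmfun n hn1).2 hyT
    have heq : mfun n = mfun n₀ := by
      by_contra hne
      exact Icc_disj hw (hmfun n hn1).1 (hmfun n₀ hn₀).1 hne h1 hy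
    exact ⟨n, ⟨hn1, heq⟩, hyT⟩
  -- injectivity of mfun on indices ≥ 1 (the Sierpiński/Baire argument)
  have hinj : ∀ n1 n2, 1 ≤ n1 → 1 ≤ n2 → mfun n1 = mfun n2 → n1 = n2 := by
    intro n1 n2 hn1 hn2 hmeq
    by_contra hne
    set m := mfun n1 with hmdef
    set S : Set ℕ := {k | 1 ≤ k ∧ mfun k = m} with hSdef
    have hn1S : n1 ∈ S := ⟨hn1, rfl⟩
    have hn2S : n2 ∈ S := ⟨hn2, hmeq.symm⟩
    have hm1 : 1 ≤ m := (hmfun n1 hn1).1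
    have hAwBw : pA w m < pB w m := hABw' m
    have hTsubI : ∀ k ∈ S, T k ⊆ Icc (pA w m) (pB w m) := by
      intro k hk
      have := (hmfun k hk.1).2
      rwa [hk.2] at this
    have hIc : ∀ y ∈ Icc (pA w m) (pB w m), ∃ k ∈ S, y ∈ T k := by
      intro y hy
      obtain ⟨k, hk, hyk⟩ := hcover n1 hn1 y hy
      exact ⟨k, ⟨hk.1, hk.2⟩, hyk⟩
    set c : ℕ → ℝ := fun k => sInf (T k) with hcdef
    set d : ℕ → ℝ := fun k => sSup (T k) with hddef
    have hcmem : ∀ k, 1 ≤ k → c k ∈ T k := fun k hk => (hTcomp k hk).sInf_mem (hTne k)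
    have hdmem : ∀ k, 1 ≤ k → d k ∈ T k := fun k hk => (hTcomp k hk).sSup_mem (hTne k)
    have hTIcc : ∀ k, 1 ≤ k → T k = Icc (c k) (d k) := by
      intro k hk
      apply Subset.antisymm
      · intro y hy
        exact ⟨csInf_le (hTcomp k hk).bddBelow hy, le_csSup (hTcomp k hk).bddAbove hy⟩
      · exact (hTconn k hk).Icc_subset (hcmem k hk) (hdmem k hk)
    have hclt : ∀ k, 1 ≤ k → c k < d k := by
      intro k hk
      have h1 : F (pA v k) ∈ T k := ⟨_, ⟨le_refl _, hABv k⟩, rfl⟩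
      have h2 : F (pB v k) ∈ T k := ⟨_, ⟨hABv k, le_refl _⟩, rfl⟩
      have hne' : F (pA v k) ≠ F (pB v k) := by
        intro h
        have := hFinj _ (Icc_sub_Xu hk ⟨le_refl _, hABv k⟩) _
          (Icc_sub_Xu hk ⟨hABv k, le_refl _⟩) h
        exact absurd this (ne_of_lt (hABv' k))
      have hcd : c k ≤ d k := by
        rw [hTIcc k hk] at h1; exact le_trans h1.1 h1.2
      rcases eq_or_lt_of_le hcd with h | h
      · exfalso
        rw [hTIcc k hk, ← h, Icc_self] at h1 h2
        exact hne' (h1.trans h2.symm)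
      · exact h
    set E : Set ℝ := Icc (pA w m) (pB w m) \ ⋃ k ∈ S, Ioo (c k) (d k) with hEdef
    have hEclosed : IsClosed E :=
      isClosed_Icc.sdiff (isOpen_biUnion fun _ _ => isOpen_Ioo)
    have hEcount : E.Countable := by
      have hsub : E ⊆ ⋃ k ∈ S, ({c k, d k} : Set ℝ) := by
        intro x hx
        obtain ⟨k, hkS, hk⟩ := hIc x hx.1
        rw [hTIcc k hkS.1] at hk
        have hnot : x ∉ Ioo (c k) (d k) := fun hmem => hx.2 (mem_biUnion hkS hmem)
        have hcd : x = c k ∨ x = d k := by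
          rcases eq_or_lt_of_le hk.1 with h | h
          · exact Or.inl h.symm
          rcases eq_or_lt_of_le hk.2 with h2 | h2
          · exact Or.inr h2
          · exact absurd ⟨h, h2⟩ hnot
        rcases hcd with h | h
        · exact mem_biUnion hkS (by simp [h])
        · exact mem_biUnion hkS (by simp [h])
      exact Set.Countable.mono hsub
        (Set.Countable.biUnion (Set.to_countable S)
          fun k _ => ((Set.finite_singleton (d k)).insert (c k)).countable)
    have hcE : ∀ k ∈ S, c k ∈ E ∧ d k ∈ E := by
      intro k hkS
      have hcT : c k ∈ T k := hcmem k hkS.1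
      have hdT : d k ∈ T k := hdmem k hkS.1
      have haux : ∀ z : ℝ, z ∈ T k → z ∉ Ioo (c k) (d k) → z ∈ E := by
        intro z hzT hznot
        refine ⟨hTsubI k hkS hzT, ?_⟩
        intro hmem
        rw [mem_iUnion₂] at hmem
        obtain ⟨j, hjS, hj⟩ := hmem
        by_cases hjk : j = k
        · subst hjk; exact hznot hj
        · exact hTdisj j k hjS.1 hkS.1 hjk z
            ((hTIcc j hjS.1).symm ▸ Ioo_subset_Icc_self hj) hzT
      constructor
      · exact haux _ hcT (fun hmem => lt_irrefl _ hmem.1)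
      · exact haux _ hdT (fun hmem => lt_irrefl _ hmem.2)
    have hgap : ∀ p q : ℝ, p < q → Ioo p q ⊆ Icc (pA w m) (pB w m) →
        (∀ y ∈ Ioo p q, y ∉ E) → ∃ k ∈ S, Ioo p q ⊆ Ioo (c k) (d k) := by
      intro p q hpq hsub hnE
      have hzmem : (p+q)/2 ∈ Ioo p q := ⟨by linarith, by linarith⟩
      have hz1 : (p+q)/2 ∈ Icc (pA w m) (pB w m) := hsub hzmem
      have hz2 : (p+q)/2 ∉ E := hnE _ hzmem
      have hzU : (p+q)/2 ∈ ⋃ k ∈ S, Ioo (c k) (d k) := by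
        by_contra h; exact hz2 ⟨hz1, h⟩
      rw [mem_iUnion₂] at hzU
      obtain ⟨k, hkS, hzk⟩ := hzU
      refine ⟨k, hkS, ?_⟩
      intro y hy
      by_contra hyk
      rw [mem_Ioo] at hyk; push_neg at hyk
      rcases le_or_gt y (c k) with h | h
      · have hcmem' : c k ∈ Ioo p q :=
          ⟨lt_of_lt_of_le hy.1 h, lt_trans hzk.1 hzmem.2⟩
        exact hnE _ hcmem' (hcE k hkS).1
      · have hdy : d k ≤ y := hyk h
        have hdmem' : d k ∈ Ioo p q :=
          ⟨lt_trans hzmem.1 hzk.2, lt_of_le_of_lt hdy hy.2⟩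
        exact hnE _ hdmem' (hcE k hkS).2
    obtain ⟨nA, hnAS, hnA⟩ := hIc (pA w m) ⟨le_refl _, le_of_lt hAwBw⟩
    obtain ⟨nB, hnBS, hnB⟩ := hIc (pB w m) ⟨le_of_lt hAwBw, le_refl _⟩
    have hcnAle : c nA ≤ pA w m := by
      rw [hTIcc nA hnAS.1] at hnA; exact hnA.1
    have hdnBge : pB w m ≤ d nB := by
      rw [hTIcc nB hnBS.1] at hnB; exact hnB.2
    by_cases hABeq : nA = nB
    · have hIT : Icc (pA w m) (pB w m) ⊆ T nA := by
        rw [hTIcc nA hnAS.1]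
        intro y hy
        refine ⟨le_trans hcnAle hy.1, le_trans hy.2 ?_⟩
        rw [hABeq]; exact hdnBge
      have hex : ∃ k', k' ∈ S ∧ k' ≠ nA := by
        by_cases h : n1 = nA
        · refine ⟨n2, hn2S, fun hh => hne ?_⟩
          rw [h, hh]
        · exact ⟨n1, hn1S, h⟩
      obtain ⟨k', hk'S, hk'ne⟩ := hex
      obtain ⟨y, hy⟩ := hTne k'
      exact hTdisj k' nA hk'S.1 hnAS.1 hk'ne y hy (hIT (hTsubI k' hk'S hy))
    · set A' := d nA with hA'def
      set B' := c nB with hB'def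
      have hA'E : A' ∈ E := (hcE nA hnAS).2
      have hB'E : B' ∈ E := (hcE nB hnBS).1
      have hA'I : A' ∈ Icc (pA w m) (pB w m) := hA'E.1
      have hB'I : B' ∈ Icc (pA w m) (pB w m) := hB'E.1
      have hA'B' : A' < B' := by
        have h1 : c nA ≤ B' := le_trans hcnAle hB'I.1
        by_contra hle; push_neg at hle
        have hmem : B' ∈ T nA := by rw [hTIcc nA hnAS.1]; exact ⟨h1, hle⟩
        exact hTdisj nB nA hnBS.1 hnAS.1 (Ne.symm hABeq) B' (hcmem nB hnBS.1) hmem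
      set Ehat := E ∩ Icc A' B' with hEhatdef
      have hEhatne : Ehat.Nonempty := ⟨A', hA'E, le_refl _, le_of_lt hA'B'⟩
      obtain ⟨x, hxE, ε, εpos, hiso⟩ := exists_isolated (hEclosed.inter isClosed_Icc)
        (Set.Countable.mono inter_subset_left hEcount) hEhatne
      have hxA' : A' ≤ x := hxE.2.1
      have hxB' : x ≤ B' := hxE.2.2
      have hxnotIoo : ∀ k ∈ S, x ∉ Ioo (c k) (d k) := by
        intro k hkS hmem
        exact hxE.1.2 (mem_biUnion hkS hmem)
      have hL : A' < x → ∃ k ∈ S, x = d k := by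
        intro hlt
        set ε' := min ε (x - A') with hε'def
        have hε'pos : 0 < ε' := lt_min εpos (by linarith)
        have hε'le : ε' ≤ x - A' := min_le_right _ _
        have hε'ε : ε' ≤ ε := min_le_left _ _
        have hsub : Ioo (x - ε') x ⊆ Icc (pA w m) (pB w m) := by
          intro y hy
          constructor
          · have h1 : A' ≤ y := by have := hy.1; linarith
            exact le_trans hA'I.1 h1
          · exact le_trans (le_trans (le_of_lt hy.2) hxB') hB'I.2
        have hnE' : ∀ y ∈ Ioo (x - ε') x, y ∉ E := by
          intro y hy hyE
          have hyEhat : y ∈ Ehat :=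
            ⟨hyE, ⟨by have := hy.1; linarith, le_trans (le_of_lt hy.2) hxB'⟩⟩
          have habs : |y - x| < ε := by
            have h7 := hy.1; have h8 := hy.2
            rw [abs_of_nonpos (by linarith : y - x ≤ 0)]
            linarith
          exact absurd (hiso y hyEhat habs) (ne_of_lt hy.2)
        obtain ⟨k, hkS, hk⟩ := hgap (x - ε') x (by linarith) hsub hnE'
        refine ⟨k, hkS, ?_⟩
        have hy0 : x - ε'/2 ∈ Ioo (x - ε') x := ⟨by linarith, by linarith⟩
        have h1 := hk hy0
        have hcx : c k < x := lt_trans h1.1 (by linarith)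
        have hdx : d k ≤ x := by
          by_contra hlt2; push_neg at hlt2
          exact hxnotIoo k hkS ⟨hcx, hlt2⟩
        have hxd : x ≤ d k := by
          by_contra hlt2; push_neg at hlt2
          have hdmem' : d k ∈ Ioo (x - ε') x := ⟨by have := h1.2; linarith, hlt2⟩
          exact lt_irrefl _ (hk hdmem').2
        exact (le_antisymm hxd hdx)
      have hR : x < B' → ∃ k ∈ S, x = c k := by
        intro hlt
        set ε' := min ε (B' - x) with hε'def
        have hε'pos : 0 < ε' := lt_min εpos (by linarith)
        have hε'le : ε' ≤ B' - x := min_le_right _ _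
        have hε'ε : ε' ≤ ε := min_le_left _ _
        have hsub : Ioo x (x + ε') ⊆ Icc (pA w m) (pB w m) := by
          intro y hy
          constructor
          · exact le_trans (le_trans hA'I.1 hxA') (le_of_lt hy.1)
          · have h1 : y ≤ B' := by have := hy.2; linarith
            exact le_trans h1 hB'I.2
        have hnE' : ∀ y ∈ Ioo x (x + ε'), y ∉ E := by
          intro y hy hyE
          have hyEhat : y ∈ Ehat :=
            ⟨hyE, ⟨le_trans hxA' (le_of_lt hy.1), by have := hy.2; linarith⟩⟩
          have habs : |y - x| < ε := by
            have h7 := hy.1; have h8 := hy.2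
            rw [abs_of_nonneg (by linarith : (0:ℝ) ≤ y - x)]
            linarith
          exact absurd (hiso y hyEhat habs) (ne_of_gt hy.1)
        obtain ⟨k, hkS, hk⟩ := hgap x (x + ε') (by linarith) hsub hnE'
        refine ⟨k, hkS, ?_⟩
        have hy0 : x + ε'/2 ∈ Ioo x (x + ε') := ⟨by linarith, by linarith⟩
        have h1 := hk hy0
        have hdx : x < d k := lt_trans (by linarith) h1.2
        have hcx : c k ≤ x := by
          by_contra hlt2; push_neg at hlt2
          have hcmem' : c k ∈ Ioo x (x + ε') := ⟨hlt2, by have := h1.1; linarith⟩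
          exact lt_irrefl _ (hk hcmem').1
        have hxc : x ≤ c k := by
          by_contra hlt2; push_neg at hlt2
          exact hxnotIoo k hkS ⟨hlt2, hdx⟩
        exact (le_antisymm hxc hcx)
      rcases eq_or_lt_of_le hxA' with hxeqA | hxgtA
      · -- x = A' = d nA
        obtain ⟨k, hkS, hxc⟩ := hR (by rw [← hxeqA]; exact hA'B')
        by_cases hknA : k = nA
        · subst hknA
          have : c k = d k := by rw [← hxc, ← hxeqA]
          exact absurd this (ne_of_lt (hclt k hkS.1))
        · have h1 : x ∈ T k := by
            rw [hTIcc k hkS.1, hxc]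
            exact ⟨le_refl _, le_of_lt (hclt k hkS.1)⟩
          have h2 : x ∈ T nA := by
            rw [hTIcc nA hnAS.1, ← hxeqA]
            exact ⟨le_of_lt (hclt nA hnAS.1), le_refl _⟩
          exact hTdisj k nA hkS.1 hnAS.1 hknA x h1 h2
      · rcases eq_or_lt_of_le hxB' with hxeqB | hxltB
        · -- x = B' = c nB
          obtain ⟨k, hkS, hxd⟩ := hL hxgtA
          by_cases hknB : k = nB
          · subst hknB
            have : c k = d k := by rw [← hxd, hxeqB]
            exact absurd this (ne_of_lt (hclt k hkS.1))
          · have h1 : x ∈ T k := by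
              rw [hTIcc k hkS.1, hxd]
              exact ⟨le_of_lt (hclt k hkS.1), le_refl _⟩
            have h2 : x ∈ T nB := by
              rw [hTIcc nB hnBS.1, hxeqB]
              exact ⟨le_refl _, le_of_lt (hclt nB hnBS.1)⟩
            exact hTdisj k nB hkS.1 hnBS.1 hknB x h1 h2
        · -- A' < x < B'
          obtain ⟨k, hkS, hxd⟩ := hL hxgtA
          obtain ⟨k', hk'S, hxc⟩ := hR hxltB
          by_cases hkk : k = k'
          · subst hkk
            have : c k = d k := by rw [← hxd, ← hxc]
            exact absurd this (ne_of_lt (hclt k hkS.1))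
          · have h1 : x ∈ T k := by
              rw [hTIcc k hkS.1, hxd]
              exact ⟨le_of_lt (hclt k hkS.1), le_refl _⟩
            have h2 : x ∈ T k' := by
              rw [hTIcc k' hk'S.1, hxc]
              exact ⟨le_refl _, le_of_lt (hclt k' hk'S.1)⟩
            exact hTdisj k k' hkS.1 hk'S.1 hkk x h1 h2
  -- length estimate
  have hlen : ∀ n, 1 ≤ n → w ^ (mfun n) ≤ 2/δ * v ^ n + 1 := by
    intro n hn
    have hAw : pA w (mfun n) ∈ Icc (pA w (mfun n)) (pB w (mfun n)) :=
      ⟨le_refl _, hABw (mfun n)⟩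
    have hBw : pB w (mfun n) ∈ Icc (pA w (mfun n)) (pB w (mfun n)) :=
      ⟨hABw (mfun n), le_refl _⟩
    obtain ⟨k1, hk1, hy1⟩ := hcover n hn _ hAw
    obtain ⟨k2, hk2, hy2⟩ := hcover n hn _ hBw
    have hk1n : k1 = n := hinj k1 n hk1.1 hn hk1.2
    have hk2n : k2 = n := hinj k2 n hk2.1 hn hk2.2
    rw [hk1n] at hy1; rw [hk2n] at hy2
    obtain ⟨x1, hx1, hfx1⟩ := hy1
    obtain ⟨x2, hx2, hfx2⟩ := hy2
    have hd := hdiam n hn x1 hx1 x2 hx2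
    rw [hfx1, hfx2] at hd
    have heq : |pB w (mfun n) - pA w (mfun n)| = w ^ (mfun n) := by
      rw [pB, abs_of_nonneg (by have := pow_nonneg (by linarith : (0:ℝ) ≤ w) (mfun n); linarith)]
      ring
    rw [heq] at hd
    exact hd
  -- pigeonhole
  have hrv : (0:ℝ) < w/v - 1 := by
    have : 1 < w / v := (one_lt_div hv0).mpr hvw
    linarith
  obtain ⟨M0, hM0⟩ := exists_nat_gt ((2/δ + 1) / (w/v - 1))
  set M := max M0 1 with hMdef
  have hM1 : 1 ≤ M := le_max_right _ _
  have hMge : ((2/δ + 1) / (w/v - 1)) < M := by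
    apply lt_of_lt_of_le hM0
    exact_mod_cast le_max_left M0 1
  have hkey : 2/δ * v ^ M + 1 < w ^ M := by
    have h1 : (1:ℝ) + M * (w/v - 1) ≤ (w/v) ^ M := by
      have := one_add_mul_le_pow (a := w/v - 1) (by linarith) M
      calc (1:ℝ) + M * (w/v - 1) ≤ (1 + (w/v - 1)) ^ M := this
      _ = (w/v) ^ M := by ring_nf
    have h2 : 2/δ + 1 < M * (w/v - 1) := by
      rw [div_lt_iff₀ hrv] at hMge
      linarith
    have h3 : (w/v) ^ M * v ^ M = w ^ M := by
      rw [div_pow]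
      field_simp
    have h4 : (1:ℝ) ≤ v ^ M := one_le_pow₀ (by linarith)
    have h5 : (0:ℝ) < v ^ M := pow_pos hv0 M
    nlinarith [h1, h2, h3, h4, h5]
  have hlt : ∀ n, 1 ≤ n → n ≤ M → mfun n < M := by
    intro n hn hnM
    have h1 := hlen n hn
    have h2 : v ^ n ≤ v ^ M := pow_mono' hv hnM
    have h3 : w ^ (mfun n) < w ^ M := by
      have hδ0 : (0:ℝ) < 2/δ := by positivity
      nlinarith
    exact (pow_lt_pow_iff_right₀ (by linarith : (1:ℝ) < w)).mp h3
  have hcard := Finset.card_le_card_of_injOn (f := mfun) (s := Finset.Icc 1 M)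
    (t := Finset.Icc 1 (M-1))
    (fun n hn => by
      simp only [Finset.coe_Icc, Set.mem_Icc] at hn ⊢
      have h9 := hlt n hn.1 hn.2
      exact ⟨(hmfun n hn.1).1, by omega⟩)
    (fun a ha b hb hab => hinj a b (Finset.mem_Icc.mp ha).1 (Finset.mem_Icc.mp hb).1 hab)
  rw [Nat.card_Icc, Nat.card_Icc] at hcard
  omega
end

section
/- There exists a family 𝓖 of open subsets of ℝ with the cardinality of the continuum such that for any two distinct U, V ∈ 𝓖 there exists a bijection f : U → V with both f and f⁻¹ uniformly continuous, but there exists no strictly increasing bijection from U onto V. -/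
open Set

noncomputable section Stmt3
namespace Stmt3

def blockL (c : ℝ) : Set ℝ := ⋃ k : ℕ, Ioo (c + 1 - (2:ℝ)⁻¹ ^ k) (c + 1 - (2:ℝ)⁻¹ ^ (k+1))
def blockR (c : ℝ) : Set ℝ := ⋃ k : ℕ, Ioo (c + (2:ℝ)⁻¹ ^ (k+1)) (c + (2:ℝ)⁻¹ ^ k)
lemma blockL_def (c : ℝ) :
    blockL c = ⋃ k : ℕ, Ioo (c + 1 - (2:ℝ)⁻¹ ^ k) (c + 1 - (2:ℝ)⁻¹ ^ (k+1)) := rfl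
lemma blockR_def (c : ℝ) :
    blockR c = ⋃ k : ℕ, Ioo (c + (2:ℝ)⁻¹ ^ (k+1)) (c + (2:ℝ)⁻¹ ^ k) := rfl

def block (b : Bool) (c : ℝ) : Set ℝ := if b then blockL c else blockR c
def US (S : ℕ → Bool) : Set ℝ := ⋃ n : ℕ, block (S n) (4*n)

lemma half_pos' (k : ℕ) : (0:ℝ) < (2:ℝ)⁻¹ ^ k := by positivity
lemma half_le_one (k : ℕ) : (2:ℝ)⁻¹ ^ k ≤ 1 := by
  apply pow_le_one₀ <;> norm_num
lemma half_succ (k : ℕ) : (2:ℝ)⁻¹ ^ (k+1) = (2:ℝ)⁻¹ ^ k / 2 := by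
  rw [pow_succ]; ring
lemma half_succ_lt (k : ℕ) : (2:ℝ)⁻¹ ^ (k+1) < (2:ℝ)⁻¹ ^ k := by
  rw [half_succ]; linarith [half_pos' k]

lemma blockL_subset (c : ℝ) : blockL c ⊆ Ioo c (c+1) := by
  intro x hx
  simp only [blockL, mem_iUnion, mem_Ioo] at hx
  obtain ⟨k, h1, h2⟩ := hx
  constructor
  · have := half_le_one k; linarith
  · have := half_pos' (k+1); linarith

lemma blockR_subset (c : ℝ) : blockR c ⊆ Ioo c (c+1) := by
  intro x hx
  simp only [blockR, mem_iUnion, mem_Ioo] at hx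
  obtain ⟨k, h1, h2⟩ := hx
  constructor
  · have := half_pos' (k+1); linarith
  · have := half_le_one k; linarith

lemma block_subset (b : Bool) (c : ℝ) : block b c ⊆ Ioo c (c+1) := by
  cases b <;> simp [block, blockL_subset, blockR_subset]

lemma mem_blockR_iff_reflect (c x : ℝ) : x ∈ blockR c ↔ 2*c + 1 - x ∈ blockL c := by
  simp only [blockR, blockL, mem_iUnion, mem_Ioo]
  constructor
  · rintro ⟨k, h1, h2⟩; exact ⟨k, by linarith, by linarith⟩
  · rintro ⟨k, h1, h2⟩; exact ⟨k, by linarith, by linarith⟩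

lemma mem_blockL_iff (c x : ℝ) :
    x ∈ blockL c ↔ (c < x ∧ x < c + 1 ∧ ∀ k : ℕ, x ≠ c + 1 - (2:ℝ)⁻¹ ^ (k+1)) := by
  constructor
  · intro hx
    obtain ⟨h1, h2⟩ := blockL_subset c hx
    refine ⟨h1, h2, ?_⟩
    simp only [blockL, mem_iUnion, mem_Ioo] at hx
    obtain ⟨k, hk1, hk2⟩ := hx
    intro j hj
    rcases lt_trichotomy j k with h | h | h
    · -- x = c+1-2⁻¹^(j+1), need contradiction with x < c+1-2⁻¹^(k+1)... 
      -- j < k : j+1 ≤ k, so 2⁻¹^(j+1) ≥ 2⁻¹^k, x ≤ c+1-2⁻¹^k < x? use hk1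
      have : (2:ℝ)⁻¹ ^ k ≤ (2:ℝ)⁻¹ ^ (j+1) := by
        apply pow_le_pow_of_le_one (by norm_num) (by norm_num) (by omega)
      rw [hj] at hk1; linarith
    · subst h; rw [hj] at hk2; linarith
    · -- k < j : j ≥ k+1, 2⁻¹^(j+1) < 2⁻¹^(k+1)
      have : (2:ℝ)⁻¹ ^ (j+1) ≤ (2:ℝ)⁻¹ ^ (k+1) := by
        apply pow_le_pow_of_le_one (by norm_num) (by norm_num) (by omega)
      have h2 := half_succ_lt (k+1)
      rw [hj] at hk2
      have : (2:ℝ)⁻¹^(j+1) < (2:ℝ)⁻¹^(k+1) := by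
        calc (2:ℝ)⁻¹^(j+1) ≤ (2:ℝ)⁻¹^(k+2) := by
              apply pow_le_pow_of_le_one (by norm_num) (by norm_num) (by omega)
          _ < (2:ℝ)⁻¹^(k+1) := half_succ_lt (k+1)
      linarith
  · rintro ⟨h1, h2, h3⟩
    set t := c + 1 - x with ht
    have ht0 : 0 < t := by simp [ht]; linarith
    have ht1 : t < 1 := by simp [ht]; linarith
    have hex : ∃ K : ℕ, (2:ℝ)⁻¹ ^ K < t := exists_pow_lt_of_lt_one ht0 (by norm_num)
    classical
    set K := Nat.find hex with hK
    have hKlt : (2:ℝ)⁻¹ ^ K < t := Nat.find_spec hex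
    have hKpos : 0 < K := by
      rcases Nat.eq_zero_or_pos K with h | h
      · exfalso; rw [h] at hKlt; simp at hKlt; linarith
      · exact h
    have hmin : ¬ ((2:ℝ)⁻¹ ^ (K-1) < t) := Nat.find_min hex (by omega)
    push_neg at hmin
    have hKeq : K - 1 + 1 = K := by omega
    -- t ≤ 2⁻¹^(K-1), t > 2⁻¹^K ; so x ∈ [c+1-2⁻¹^(K-1), c+1-2⁻¹^K)
    have hne : t ≠ (2:ℝ)⁻¹ ^ (K-1) := by
      intro h
      rcases Nat.eq_zero_or_pos (K-1) with h0 | h0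
      · rw [h0] at h; simp at h; linarith
      · have := h3 (K-1-1)
        apply this
        rw [ht] at h
        have : K - 1 - 1 + 1 = K - 1 := by omega
        rw [this]; linarith
    have hlt : t < (2:ℝ)⁻¹ ^ (K-1) := lt_of_le_of_ne hmin hne
    simp only [blockL, mem_iUnion, mem_Ioo]
    refine ⟨K-1, by rw [ht] at hlt; linarith, ?_⟩
    rw [hKeq, ht] at *
    linarith



lemma mem_blockR_iff (c x : ℝ) :
    x ∈ blockR c ↔ (c < x ∧ x < c + 1 ∧ ∀ k : ℕ, x ≠ c + (2:ℝ)⁻¹ ^ (k+1)) := by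
  rw [mem_blockR_iff_reflect, mem_blockL_iff]
  constructor
  · rintro ⟨h1, h2, h3⟩
    refine ⟨by linarith, by linarith, fun k hk => h3 k (by rw [hk]; ring)⟩
  · rintro ⟨h1, h2, h3⟩
    refine ⟨by linarith, by linarith, fun k hk => h3 k (by linarith)⟩

lemma mem_block_iff (b : Bool) (c x : ℝ) :
    x ∈ block b c ↔ (c < x ∧ x < c + 1 ∧
      ∀ k : ℕ, x ≠ (if b then c + 1 - (2:ℝ)⁻¹ ^ (k+1) else c + (2:ℝ)⁻¹ ^ (k+1))) := by
  cases b <;> simp [block, mem_blockR_iff, mem_blockL_iff]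

-- the k-th component, for easy membership
lemma mem_blockL_comp {c x : ℝ} (k : ℕ)
    (h1 : c + 1 - (2:ℝ)⁻¹ ^ k < x) (h2 : x < c + 1 - (2:ℝ)⁻¹ ^ (k+1)) : x ∈ blockL c := by
  rw [blockL_def]; exact mem_iUnion.2 ⟨k, mem_Ioo.2 ⟨h1, h2⟩⟩

lemma mem_blockR_comp {c x : ℝ} (k : ℕ)
    (h1 : c + (2:ℝ)⁻¹ ^ (k+1) < x) (h2 : x < c + (2:ℝ)⁻¹ ^ k) : x ∈ blockR c := by
  rw [blockR_def]; exact mem_iUnion.2 ⟨k, mem_Ioo.2 ⟨h1, h2⟩⟩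

lemma Ioo_low_subset_blockL (c : ℝ) : Ioo c (c + 2⁻¹) ⊆ blockL c := by
  intro x hx
  refine mem_blockL_comp 0 (by simpa using hx.1) ?_
  have : ((2:ℝ)⁻¹)^(0+1) = 2⁻¹ := by norm_num
  rw [this]; linarith [hx.2]

lemma Ioo_high_subset_blockR (c : ℝ) : Ioo (c + 2⁻¹) (c+1) ⊆ blockR c := by
  intro x hx
  refine mem_blockR_comp 0 ?_ (by simpa using hx.2)
  have : ((2:ℝ)⁻¹)^(0+1) = 2⁻¹ := by norm_num
  rw [this]; exact hx.1

-- two points in any block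
lemma block_two_points (b : Bool) (c : ℝ) :
    ∃ u u', u ∈ block b c ∧ u' ∈ block b c ∧ c < u ∧ u < u' ∧ u' < c + 1 := by
  cases b
  · refine ⟨c + 3/4, c + 7/8, ?_, ?_, by norm_num, by norm_num, by norm_num⟩
    · show c + 3/4 ∈ blockR c
      exact Ioo_high_subset_blockR c ⟨by norm_num, by norm_num⟩
    · show c + 7/8 ∈ blockR c
      exact Ioo_high_subset_blockR c ⟨by norm_num, by norm_num⟩
  · refine ⟨c + 1/4, c + 3/8, ?_, ?_, by norm_num, by norm_num, by norm_num⟩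
    · show c + 1/4 ∈ blockL c
      exact Ioo_low_subset_blockL c ⟨by norm_num, by norm_num⟩
    · show c + 3/8 ∈ blockL c
      exact Ioo_low_subset_blockL c ⟨by norm_num, by norm_num⟩

-- strips
lemma US_strip {S : ℕ → Bool} {x : ℝ} (hx : x ∈ US S) : ∃ n : ℕ, 4*(n:ℝ) < x ∧ x < 4*n+1 := by
  obtain ⟨n, hn⟩ := mem_iUnion.1 hx
  exact ⟨n, (block_subset _ _ hn).1, (block_subset _ _ hn).2⟩

lemma strip_eq {n m : ℕ} {x : ℝ} (h1 : 4*(n:ℝ) < x) (h2 : x < 4*n+1)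
    (h3 : 4*(m:ℝ) < x) (h4 : x < 4*m+1) : n = m := by
  by_contra hne
  rcases Nat.lt_or_ge n m with h | h
  · have : (n:ℝ) + 1 ≤ m := by exact_mod_cast Nat.succ_le_of_lt h
    linarith
  · have hlt : m < n := lt_of_le_of_ne h fun e => hne e.symm
    have : (m:ℝ) + 1 ≤ n := by exact_mod_cast Nat.succ_le_of_lt hlt
    linarith

-- locality: within strip n, membership in US S is membership in block (S n)
lemma US_local {S : ℕ → Bool} {n : ℕ} {x : ℝ} (h1 : 4*(n:ℝ) < x) (h2 : x < 4*n+1) :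
    x ∈ US S ↔ x ∈ block (S n) (4*n) := by
  constructor
  · intro hx
    obtain ⟨m, hm⟩ := mem_iUnion.1 hx
    have h3 := (block_subset _ _ hm).1
    have h4 := (block_subset _ _ hm).2
    have : n = m := strip_eq h1 h2 h3 h4
    subst this; exact hm
  · intro hx; exact mem_iUnion.2 ⟨n, hx⟩

lemma US_mem_of_block {S : ℕ → Bool} {n : ℕ} {x : ℝ} (h : x ∈ block (S n) (4*n)) : x ∈ US S :=
  mem_iUnion.2 ⟨n, h⟩

lemma US_unbdd (S : ℕ → Bool) (a : ℝ) : ∃ u ∈ US S, a < u := by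
  obtain ⟨n, hn⟩ := exists_nat_ge a
  obtain ⟨u, u', hu, _, h1, _, _⟩ := block_two_points (S n) (4*n)
  have hn4 : (n:ℝ) ≤ 4*n := by nlinarith [Nat.cast_nonneg (α := ℝ) n]
  exact ⟨u, US_mem_of_block hu, by linarith⟩

lemma US_bddBelow (S : ℕ → Bool) : BddBelow (US S) := by
  refine ⟨0, fun x hx => ?_⟩
  obtain ⟨n, h1, _⟩ := US_strip hx
  have : (0:ℝ) ≤ 4*n := by positivity
  linarith

lemma US_pos {S : ℕ → Bool} {x : ℝ} (hx : x ∈ US S) : 0 < x := by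
  obtain ⟨n, h1, _⟩ := US_strip hx
  have : (0:ℝ) ≤ 4*n := by positivity
  linarith

lemma US_open (S : ℕ → Bool) : IsOpen (US S) := by
  apply isOpen_iUnion
  intro n
  cases hS : S n <;> simp only [block, if_pos rfl, if_neg Bool.false_ne_true]
  · rw [blockR_def]; exact isOpen_iUnion fun k => isOpen_Ioo
  · rw [blockL_def]; exact isOpen_iUnion fun k => isOpen_Ioo

lemma US_inj : Function.Injective US := by
  intro S T h
  funext n
  by_contra hne
  have hx : (4*(n:ℝ) + 7/8) ∈ blockR (4*n) :=
    Ioo_high_subset_blockR _ ⟨by norm_num, by norm_num⟩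
  have hnx : (4*(n:ℝ) + 7/8) ∉ blockL (4*n) := by
    rw [mem_blockL_iff]
    push_neg
    intro _ _
    refine ⟨2, by norm_num; ring⟩
  have h1 : 4*(n:ℝ) < 4*n+7/8 := by norm_num
  have h2 : 4*(n:ℝ)+7/8 < 4*n+1 := by norm_num
  have hmem : (4*(n:ℝ)+7/8) ∈ US S ↔ (4*(n:ℝ)+7/8) ∈ US T := by rw [h]
  rw [US_local h1 h2, US_local h1 h2] at hmem
  cases hS : S n <;> cases hT : T n
  · exact hne (hS.trans hT.symm)
  · rw [hS, hT] at hmem; simp only [block, if_pos rfl, if_neg Bool.false_ne_true] at hmem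
    exact hnx (hmem.1 hx)
  · rw [hS, hT] at hmem; simp only [block, if_pos rfl, if_neg Bool.false_ne_true] at hmem
    exact hnx (hmem.2 hx)
  · exact hne (hS.trans hT.symm)



def gmap (S T : ℕ → Bool) (x : ℝ) : ℝ :=
  if S (Nat.floor (x/4)) = T (Nat.floor (x/4)) then x else 8*(Nat.floor (x/4)) + 1 - x

lemma floor_strip {n : ℕ} {x : ℝ} (h1 : 4*(n:ℝ) < x) (h2 : x < 4*n+1) :
    Nat.floor (x/4) = n := by
  have hn0 : (0:ℝ) ≤ n := Nat.cast_nonneg n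
  rw [Nat.floor_eq_iff (by linarith)]
  constructor
  · linarith [ (by linarith : (4:ℝ)*n < x) ]
  · push_cast; linarith

lemma block_reflect {b : Bool} {c x : ℝ} (h : x ∈ block b c) : 2*c+1-x ∈ block (!b) c := by
  cases b
  · simp only [block, if_neg Bool.false_ne_true, Bool.not_false, if_pos rfl] at *
    exact (mem_blockR_iff_reflect c x).1 h
  · simp only [block, if_pos rfl, Bool.not_true, if_neg Bool.false_ne_true] at *
    rw [mem_blockR_iff_reflect]
    have : 2*c+1-(2*c+1-x) = x := by ring
    rw [this]; exact h

lemma gmap_strip {S T : ℕ → Bool} {n : ℕ} {x : ℝ} (h1 : 4*(n:ℝ) < x) (h2 : x < 4*n+1) :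
    gmap S T x = (if S n = T n then x else 8*(n:ℝ)+1-x) ∧
      4*(n:ℝ) < gmap S T x ∧ gmap S T x < 4*n+1 := by
  have hf : Nat.floor (x/4) = n := floor_strip h1 h2
  unfold gmap
  rw [hf]
  by_cases h : S n = T n
  · simp only [if_pos h]; exact ⟨trivial, h1, h2⟩
  · simp only [if_neg h]; exact ⟨trivial, by linarith, by linarith⟩

lemma gmap_mem {S T : ℕ → Bool} {x : ℝ} (hx : x ∈ US S) : gmap S T x ∈ US T := by
  obtain ⟨n, h1, h2⟩ := US_strip hx
  obtain ⟨heq, h1', h2'⟩ := gmap_strip (S := S) (T := T) h1 h2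
  rw [US_local h1 h2] at hx
  rw [US_local h1' h2']
  by_cases h : S n = T n
  · rw [if_pos h] at heq; rw [heq, ← h]; exact hx
  · rw [if_neg h] at heq; rw [heq]
    have := block_reflect (b := S n) (c := 4*n) (x := x) hx
    have hb : (!(S n)) = T n := by
      cases hS : S n <;> cases hT : T n <;> simp_all
    rw [hb] at this
    have harg : 2*(4*(n:ℝ))+1-x = 8*n+1-x := by ring
    rw [harg] at this
    exact this

lemma gmap_invol {S T : ℕ → Bool} {x : ℝ} (hx : x ∈ US S) : gmap T S (gmap S T x) = x := by
  obtain ⟨n, h1, h2⟩ := US_strip hx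
  obtain ⟨heq, h1', h2'⟩ := gmap_strip (S := S) (T := T) h1 h2
  obtain ⟨heq2, _, _⟩ := gmap_strip (S := T) (T := S) h1' h2'
  rw [heq2, heq]
  by_cases h : S n = T n
  · rw [if_pos h, if_pos h.symm]
  · rw [if_neg h, if_neg (fun hh => h hh.symm)]; ring

lemma gmap_isom {S T : ℕ → Bool} {x y : ℝ} (hx : x ∈ US S) (hy : y ∈ US S)
    (h : |x - y| < 1) : |gmap S T x - gmap S T y| = |x - y| := by
  obtain ⟨n, hx1, hx2⟩ := US_strip hx
  obtain ⟨m, hy1, hy2⟩ := US_strip hy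
  have hnm : n = m := by
    by_contra hne
    rcases Nat.lt_or_ge n m with hlt | hge
    · have : (n:ℝ) + 1 ≤ m := by exact_mod_cast Nat.succ_le_of_lt hlt
      have : x < y - 1 := by linarith
      rw [abs_lt] at h; linarith
    · have hlt : m < n := by omega
      have : (m:ℝ) + 1 ≤ n := by exact_mod_cast Nat.succ_le_of_lt hlt
      have : y < x - 1 := by linarith
      rw [abs_lt] at h; linarith
  subst hnm
  obtain ⟨heqx, _, _⟩ := gmap_strip (S := S) (T := T) hx1 hx2
  obtain ⟨heqy, _, _⟩ := gmap_strip (S := S) (T := T) hy1 hy2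
  rw [heqx, heqy]
  by_cases hc : S n = T n
  · rw [if_pos hc, if_pos hc]
  · rw [if_neg hc, if_neg hc]
    have : 8*(n:ℝ)+1-x - (8*n+1-y) = -(x - y) := by ring
    rw [this, abs_neg]

def simEquiv (S T : ℕ → Bool) : ↥(US S) ≃ ↥(US T) where
  toFun := fun x => ⟨gmap S T x, gmap_mem x.2⟩
  invFun := fun y => ⟨gmap T S y, gmap_mem y.2⟩
  left_inv := fun x => Subtype.ext (gmap_invol x.2)
  right_inv := fun y => Subtype.ext (gmap_invol y.2)

lemma simEquiv_uc (S T : ℕ → Bool) : UniformContinuous ⇑(simEquiv S T) := by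
  rw [Metric.uniformContinuous_iff]
  intro ε hε
  refine ⟨min ε 1, by positivity, ?_⟩
  rintro ⟨x, hx⟩ ⟨y, hy⟩ hd
  have hd' : |x - y| < min ε 1 := by
    rw [Subtype.dist_eq, Real.dist_eq] at hd; exact hd
  have h1 : |x - y| < 1 := lt_of_lt_of_le hd' (min_le_right _ _)
  have h2 : |x - y| < ε := lt_of_lt_of_le hd' (min_le_left _ _)
  show dist (⟨gmap S T x, _⟩ : ↥(US T)) ⟨gmap S T y, _⟩ < ε
  rw [Subtype.dist_eq, Real.dist_eq]
  calc |gmap S T x - gmap S T y| = |x - y| := gmap_isom hx hy h1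
    _ < ε := h2

lemma simEquiv_symm_uc (S T : ℕ → Bool) : UniformContinuous ⇑(simEquiv S T).symm := by
  have : ⇑(simEquiv S T).symm = ⇑(simEquiv T S) := by
    funext y; rfl
  rw [this]; exact simEquiv_uc T S



/-- `a` is a "left cluster point" of `U`. -/
def IsLpt (U : Set ℝ) (a : ℝ) : Prop :=
  a ∉ U ∧ ∀ ε > 0, ∃ x z y : ℝ, x ∈ U ∧ y ∈ U ∧ z ∉ U ∧ a - ε < x ∧ x < z ∧ z < y ∧ y < a

/-- `a` is a "right cluster point" of `U`. -/
def IsRpt (U : Set ℝ) (a : ℝ) : Prop :=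
  a ∉ U ∧ ∀ ε > 0, ∃ x z y : ℝ, x ∈ U ∧ y ∈ U ∧ z ∉ U ∧ a < x ∧ x < z ∧ z < y ∧ y < a + ε

lemma US_notmem_int_mul (S : ℕ → Bool) (n : ℕ) : (4*(n:ℝ)) ∉ US S := by
  intro h
  obtain ⟨m, h1, h2⟩ := US_strip h
  have e1 : 4*m < 4*n := by exact_mod_cast h1
  have e2 : 4*n < 4*m+1 := by exact_mod_cast h2
  omega

lemma US_notmem_int_mul_add_one (S : ℕ → Bool) (n : ℕ) : (4*(n:ℝ)+1) ∉ US S := by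
  intro h
  obtain ⟨m, h1, h2⟩ := US_strip h
  have e1 : 4*m < 4*n+1 := by exact_mod_cast h1
  have e2 : 4*n+1 < 4*m+1 := by exact_mod_cast h2
  omega

lemma isLpt_US_of {S : ℕ → Bool} {n : ℕ} (hS : S n = true) : IsLpt (US S) (4*(n:ℝ)+1) := by
  refine ⟨US_notmem_int_mul_add_one S n, ?_⟩
  intro ε hε
  obtain ⟨k, hk⟩ := exists_pow_lt_of_lt_one hε (by norm_num : (2:ℝ)⁻¹ < 1)
  set p := (2:ℝ)⁻¹ ^ k with hp
  have hp0 : 0 < p := half_pos' k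
  have e1 : (2:ℝ)⁻¹ ^ (k+1) = p / 2 := half_succ k
  have e2 : (2:ℝ)⁻¹ ^ (k+2) = p / 4 := by rw [half_succ (k+1), e1]; ring
  have e3 : (2:ℝ)⁻¹ ^ (k+3) = p / 8 := by rw [half_succ (k+2), e2]; ring
  refine ⟨4*n+1 - 3*(p/4), 4*n+1 - p/2, 4*n+1 - 3*(p/8), ?_, ?_, ?_, by linarith, by linarith,
    by linarith, by linarith⟩
  · apply US_mem_of_block (n := n)
    rw [block, hS, if_pos rfl]
    exact mem_blockL_comp k (by rw [hp]; linarith) (by rw [e1]; linarith)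
  · apply US_mem_of_block (n := n)
    rw [block, hS, if_pos rfl]
    exact mem_blockL_comp (k+1) (by rw [e1]; linarith) (by rw [e2]; linarith)
  · intro hmem
    have hb1 : 4*(n:ℝ) < 4*n+1 - p/2 := by have := half_le_one k; linarith
    have hb2 : 4*(n:ℝ)+1 - p/2 < 4*n+1 := by linarith
    rw [US_local hb1 hb2, block, hS, if_pos rfl, mem_blockL_iff] at hmem
    exact hmem.2.2 k (by rw [e1])

lemma isRpt_US_of {S : ℕ → Bool} {n : ℕ} (hS : S n = false) : IsRpt (US S) (4*(n:ℝ)) := by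
  refine ⟨US_notmem_int_mul S n, ?_⟩
  intro ε hε
  obtain ⟨k, hk⟩ := exists_pow_lt_of_lt_one hε (by norm_num : (2:ℝ)⁻¹ < 1)
  set p := (2:ℝ)⁻¹ ^ k with hp
  have hp0 : 0 < p := half_pos' k
  have e1 : (2:ℝ)⁻¹ ^ (k+1) = p / 2 := half_succ k
  have e2 : (2:ℝ)⁻¹ ^ (k+2) = p / 4 := by rw [half_succ (k+1), e1]; ring
  have e3 : (2:ℝ)⁻¹ ^ (k+3) = p / 8 := by rw [half_succ (k+2), e2]; ring
  refine ⟨4*n + 3*(p/8), 4*n + p/2, 4*n + 3*(p/4), ?_, ?_, ?_, by linarith, by linarith,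
    by linarith, by linarith⟩
  · apply US_mem_of_block (n := n)
    rw [block, hS, if_neg Bool.false_ne_true]
    exact mem_blockR_comp (k+1) (by rw [e2]; linarith) (by rw [e1]; linarith)
  · apply US_mem_of_block (n := n)
    rw [block, hS, if_neg Bool.false_ne_true]
    exact mem_blockR_comp k (by rw [e1]; linarith) (by rw [hp]; linarith)
  · intro hmem
    have hb1 : 4*(n:ℝ) < 4*n + p/2 := by linarith
    have hb2 : 4*(n:ℝ) + p/2 < 4*n+1 := by have := half_le_one k; linarith
    rw [US_local hb1 hb2, block, hS, if_neg Bool.false_ne_true, mem_blockR_iff] at hmem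
    exact hmem.2.2 k (by rw [e1])

lemma isLpt_US {S : ℕ → Bool} {a : ℝ} (h : IsLpt (US S) a) :
    ∃ n : ℕ, S n = true ∧ a = 4*(n:ℝ)+1 := by
  obtain ⟨ha, hw⟩ := h
  -- for every ε there is a member of US S in (a-ε, a)
  have hy : ∀ ε > 0, ∃ y ∈ US S, a - ε < y ∧ y < a := by
    intro ε hε
    obtain ⟨x, z, y, hx, hyU, _, h1, h2, h3, h4⟩ := hw ε hε
    exact ⟨y, hyU, by linarith, h4⟩
  obtain ⟨y₀, hy₀, hy₀1, hy₀2⟩ := hy 1 one_pos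
  obtain ⟨m, hm1, hm2⟩ := US_strip hy₀
  have ham : 4*(m:ℝ) < a := by linarith
  have ham2 : a ≤ 4*(m:ℝ)+1 := by
    by_contra hgt
    push_neg at hgt
    obtain ⟨y', hy', hy'1, hy'2⟩ := hy (a - (4*m+1)) (by linarith)
    obtain ⟨m', hm'1, hm'2⟩ := US_strip hy'
    have : 4*(m:ℝ)+1 < y' := by linarith
    have hmm : m < m' := by
      have h1 : 4*m+1 < 4*m'+1 := by exact_mod_cast lt_trans this hm'2
      omega
    have : (m:ℝ)+1 ≤ m' := by exact_mod_cast Nat.succ_le_of_lt hmm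
    have : 4*(m:ℝ)+4 ≤ 4*m' := by linarith
    -- y₀ < 4m+1 but y₀ > a-1 and a > y' > 4m' ≥ 4m+4
    linarith
  rcases eq_or_lt_of_le ham2 with heq | hlt
  · -- a = 4m+1
    cases hSm : S m
    · -- S m = false: contradiction using the gap witness in (4m+1/2, 4m+1)
      exfalso
      obtain ⟨x, z, y, hx, hyU, hz, h1, h2, h3, h4⟩ := hw (2⁻¹) (by norm_num)
      apply hz
      apply US_mem_of_block (n := m)
      rw [block, hSm, if_neg Bool.false_ne_true]
      apply Ioo_high_subset_blockR
      constructor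
      · rw [heq] at h1; linarith
      · rw [heq] at h4; linarith
    · exact ⟨m, hSm, heq⟩
  · -- 4m < a < 4m+1 and a ∉ US S: a is a deleted point of block (S m)
    exfalso
    rw [US_local ham hlt] at ha
    cases hSm : S m
    · rw [block, hSm, if_neg Bool.false_ne_true, mem_blockR_iff] at ha
      push_neg at ha
      obtain ⟨k, hk⟩ := ha ham hlt
      obtain ⟨x, z, y, hx, hyU, hz, h1, h2, h3, h4⟩ := hw ((2:ℝ)⁻¹^(k+2)) (half_pos' (k+2))
      apply hz
      apply US_mem_of_block (n := m)
      rw [block, hSm, if_neg Bool.false_ne_true]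
      apply mem_blockR_comp (k+1)
      · rw [hk] at h1; rw [half_succ (k+1)] at h1 ⊢; linarith
      · rw [hk] at h4; linarith
    · rw [block, hSm, if_pos rfl, mem_blockL_iff] at ha
      push_neg at ha
      obtain ⟨k, hk⟩ := ha ham hlt
      obtain ⟨x, z, y, hx, hyU, hz, h1, h2, h3, h4⟩ := hw ((2:ℝ)⁻¹^(k+1)) (half_pos' (k+1))
      apply hz
      apply US_mem_of_block (n := m)
      rw [block, hSm, if_pos rfl]
      apply mem_blockL_comp k
      · rw [hk] at h1; rw [half_succ k] at h1; rw [half_succ k] at *; linarith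
      · rw [hk] at h4; linarith

lemma isRpt_US {S : ℕ → Bool} {a : ℝ} (h : IsRpt (US S) a) :
    ∃ n : ℕ, S n = false ∧ a = 4*(n:ℝ) := by
  obtain ⟨ha, hw⟩ := h
  have hy : ∀ ε > 0, ∃ y ∈ US S, a < y ∧ y < a + ε := by
    intro ε hε
    obtain ⟨x, z, y, hx, hyU, _, h1, h2, h3, h4⟩ := hw ε hε
    exact ⟨x, hx, h1, by linarith⟩
  obtain ⟨x₀, hx₀, hx₀1, hx₀2⟩ := hy 1 one_pos
  obtain ⟨m, hm1, hm2⟩ := US_strip hx₀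
  have ham : a < 4*(m:ℝ)+1 := by linarith
  have ham2 : 4*(m:ℝ) ≤ a := by
    by_contra hgt
    push_neg at hgt
    obtain ⟨x', hx', hx'1, hx'2⟩ := hy (4*m - a) (by linarith)
    obtain ⟨m', hm'1, hm'2⟩ := US_strip hx'
    have hx'4m : x' < 4*(m:ℝ) := by linarith
    have hmm : m' < m := by
      have h1 : 4*m' < 4*m := by exact_mod_cast lt_trans hm'1 hx'4m
      omega
    have : (m':ℝ)+1 ≤ m := by exact_mod_cast Nat.succ_le_of_lt hmm
    have : 4*(m':ℝ)+4 ≤ 4*m := by linarith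
    -- x' < 4m'+1 ≤ 4m-3, so a < 4m-3; but x₀ < a+1 and x₀ > 4m gives a > 4m-1
    linarith
  rcases eq_or_lt_of_le ham2 with heq | hlt
  · cases hSm : S m
    · exact ⟨m, hSm, heq.symm⟩
    · exfalso
      obtain ⟨x, z, y, hx, hyU, hz, h1, h2, h3, h4⟩ := hw (2⁻¹) (by norm_num)
      apply hz
      apply US_mem_of_block (n := m)
      rw [block, hSm, if_pos rfl]
      apply Ioo_low_subset_blockL
      constructor
      · linarith
      · linarith
  · exfalso
    rw [US_local hlt ham] at ha
    cases hSm : S m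
    · rw [block, hSm, if_neg Bool.false_ne_true, mem_blockR_iff] at ha
      push_neg at ha
      obtain ⟨k, hk⟩ := ha hlt ham
      obtain ⟨x, z, y, hx, hyU, hz, h1, h2, h3, h4⟩ := hw ((2:ℝ)⁻¹^(k+1)) (half_pos' (k+1))
      apply hz
      apply US_mem_of_block (n := m)
      rw [block, hSm, if_neg Bool.false_ne_true]
      apply mem_blockR_comp k
      · rw [hk] at h1; linarith
      · rw [hk] at h4; rw [half_succ k] at h4; linarith
    · rw [block, hSm, if_pos rfl, mem_blockL_iff] at ha
      push_neg at ha
      obtain ⟨k, hk⟩ := ha hlt ham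
      obtain ⟨x, z, y, hx, hyU, hz, h1, h2, h3, h4⟩ := hw ((2:ℝ)⁻¹^(k+2)) (half_pos' (k+2))
      apply hz
      apply US_mem_of_block (n := m)
      rw [block, hSm, if_pos rfl]
      apply mem_blockL_comp (k+1)
      · rw [hk] at h1; linarith
      · rw [hk] at h4; rw [half_succ (k+1)] at h4 ⊢; linarith



def Phi (U : Set ℝ) (g : ℝ → ℝ) (a : ℝ) : ℝ := sSup (g '' {x | x ∈ U ∧ x < a})
def Phi' (U : Set ℝ) (g : ℝ → ℝ) (a : ℝ) : ℝ := sInf (g '' {x | x ∈ U ∧ a < x})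

structure Hyp (U V : Set ℝ) (g h : ℝ → ℝ) : Prop where
  maps : ∀ x ∈ U, g x ∈ V
  mapsb : ∀ y ∈ V, h y ∈ U
  li : ∀ x ∈ U, h (g x) = x
  ri : ∀ y ∈ V, g (h y) = y
  mono : ∀ ⦃x⦄, x ∈ U → ∀ ⦃y⦄, y ∈ U → x < y → g x < g y
  topU : ∀ a : ℝ, ∃ u ∈ U, a < u
  topV : ∀ a : ℝ, ∃ v ∈ V, a < v
  bddV : BddBelow V
  bddU : BddBelow U
  openU : IsOpen U

variable {U V : Set ℝ} {g h : ℝ → ℝ} {a a' : ℝ}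

lemma Hyp.monoh (hyp : Hyp U V g h) : ∀ ⦃y⦄, y ∈ V → ∀ ⦃y'⦄, y' ∈ V → y < y' → h y < h y' := by
  intro y hy y' hy' hlt
  rcases lt_trichotomy (h y) (h y') with hc | hc | hc
  · exact hc
  · exfalso
    have := hyp.ri y hy
    have := hyp.ri y' hy'
    rw [← ‹g (h y) = y›, ← ‹g (h y') = y'›, hc] at hlt
    exact lt_irrefl _ hlt
  · exfalso
    have h1 := hyp.mono (hyp.mapsb y' hy') (hyp.mapsb y hy) hc
    rw [hyp.ri y hy, hyp.ri y' hy'] at h1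
    exact lt_irrefl _ (h1.trans hlt)

lemma Hyp.symm (hyp : Hyp U V g h) (oV : IsOpen V) : Hyp V U h g where
  maps := hyp.mapsb
  mapsb := hyp.maps
  li := hyp.ri
  ri := hyp.li
  mono := hyp.monoh
  topU := hyp.topV
  topV := hyp.topU
  bddV := hyp.bddU
  bddU := hyp.bddV
  openU := oV

lemma Hyp.bddAboveLower (hyp : Hyp U V g h) (a : ℝ) : BddAbove (g '' {x | x ∈ U ∧ x < a}) := by
  obtain ⟨u, hu, hau⟩ := hyp.topU a
  refine ⟨g u, ?_⟩
  rintro v ⟨x, ⟨hx, hxa⟩, rfl⟩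
  exact le_of_lt (hyp.mono hx hu (hxa.trans hau))

lemma Hyp.bddBelowUpper (hyp : Hyp U V g h) (a : ℝ) : BddBelow (g '' {x | x ∈ U ∧ a < x}) := by
  refine hyp.bddV.mono ?_
  rintro v ⟨x, ⟨hx, _⟩, rfl⟩
  exact hyp.maps x hx

lemma Hyp.upperNe (hyp : Hyp U V g h) (a : ℝ) : (g '' {x | x ∈ U ∧ a < x}).Nonempty := by
  obtain ⟨u, hu, hau⟩ := hyp.topU a
  exact ⟨g u, u, ⟨hu, hau⟩, rfl⟩

lemma le_phi (hyp : Hyp U V g h) {u : ℝ} (hu : u ∈ U) (hua : u < a) : g u ≤ Phi U g a :=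
  le_csSup (hyp.bddAboveLower a) ⟨u, ⟨hu, hua⟩, rfl⟩

lemma phi'_le (hyp : Hyp U V g h) {u : ℝ} (hu : u ∈ U) (hau : a < u) : Phi' U g a ≤ g u :=
  csInf_le (hyp.bddBelowUpper a) ⟨u, ⟨hu, hau⟩, rfl⟩

lemma phi_le (hyp : Hyp U V g h) (hne : ∃ x ∈ U, x < a) {b : ℝ}
    (hub : ∀ x ∈ U, x < a → g x ≤ b) : Phi U g a ≤ b := by
  apply csSup_le
  · obtain ⟨x, hx, hxa⟩ := hne; exact ⟨g x, x, ⟨hx, hxa⟩, rfl⟩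
  · rintro v ⟨x, ⟨hx, hxa⟩, rfl⟩; exact hub x hx hxa

lemma le_phi' (hyp : Hyp U V g h) {b : ℝ} (hlb : ∀ x ∈ U, a < x → b ≤ g x) :
    b ≤ Phi' U g a := by
  apply le_csInf (hyp.upperNe a)
  rintro v ⟨x, ⟨hx, hxa⟩, rfl⟩; exact hlb x hx hxa

/-- an interior point of `U` between two reals always exists near a point of `U` -/
lemma Hyp.between_lt (hyp : Hyp U V g h) {y b : ℝ} (hy : y ∈ U) (hyb : y < b) :
    ∃ u ∈ U, y < u ∧ u < b := by
  obtain ⟨δ, hδ, hball⟩ := Metric.isOpen_iff.1 hyp.openU y hy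
  refine ⟨min (y + δ/2) ((y + b)/2), hball ?_, ?_, ?_⟩
  · rw [Metric.mem_ball, Real.dist_eq, abs_lt]
    constructor
    · have : y - δ < min (y + δ/2) ((y+b)/2) := by
        apply lt_min <;> linarith
      linarith [this]
    · have : min (y + δ/2) ((y+b)/2) ≤ y + δ/2 := min_le_left _ _
      linarith
  · apply lt_min <;> linarith
  · calc min (y + δ/2) ((y+b)/2) ≤ (y+b)/2 := min_le_right _ _
      _ < b := by linarith

lemma Hyp.between_gt (hyp : Hyp U V g h) {y b : ℝ} (hy : y ∈ U) (hby : b < y) :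
    ∃ u ∈ U, b < u ∧ u < y := by
  obtain ⟨δ, hδ, hball⟩ := Metric.isOpen_iff.1 hyp.openU y hy
  refine ⟨max (y - δ/2) ((y + b)/2), hball ?_, ?_, ?_⟩
  · rw [Metric.mem_ball, Real.dist_eq, abs_lt]
    constructor
    · have : y - δ/2 ≤ max (y - δ/2) ((y+b)/2) := le_max_left _ _
      linarith
    · have : max (y - δ/2) ((y+b)/2) < y + δ := by
        apply max_lt <;> linarith
      linarith
  · calc b < (y+b)/2 := by linarith
      _ ≤ max (y - δ/2) ((y+b)/2) := le_max_right _ _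
  · apply max_lt <;> linarith

lemma phi_notmem (hyp : Hyp U V g h) (ha : a ∉ U) (hne : ∃ x ∈ U, x < a) :
    Phi U g a ∉ V := by
  intro hmem
  set b := Phi U g a with hb
  have hyU : h b ∈ U := hyp.mapsb b hmem
  have hgy : g (h b) = b := hyp.ri b hmem
  rcases lt_trichotomy (h b) a with hc | hc | hc
  · obtain ⟨u, hu, h1, h2⟩ := hyp.between_lt hyU hc
    have : g u ≤ b := le_phi hyp hu h2
    have : g (h b) < g u := hyp.mono hyU hu h1
    linarith [this, hgy, ‹g u ≤ b›]
  · rw [hc] at hyU; exact ha hyU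
  · obtain ⟨u, hu, h1, h2⟩ := hyp.between_gt hyU hc
    have hub : b ≤ g u := phi_le hyp hne (fun x hx hxa => le_of_lt (hyp.mono hx hu (hxa.trans h1)))
    have : g u < g (h b) := hyp.mono hu hyU h2
    linarith [this, hgy, hub]

lemma phi'_notmem (hyp : Hyp U V g h) (ha : a ∉ U) : Phi' U g a ∉ V := by
  intro hmem
  set b := Phi' U g a with hb
  have hyU : h b ∈ U := hyp.mapsb b hmem
  have hgy : g (h b) = b := hyp.ri b hmem
  rcases lt_trichotomy (h b) a with hc | hc | hc
  · obtain ⟨u, hu, h1, h2⟩ := hyp.between_lt hyU hc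
    have hlb : g u ≤ b := le_phi' hyp (fun x hx hxa => le_of_lt (hyp.mono hu hx (h2.trans hxa)))
    have : g (h b) < g u := hyp.mono hyU hu h1
    linarith [this, hgy, hlb]
  · rw [hc] at hyU; exact ha hyU
  · obtain ⟨u, hu, h1, h2⟩ := hyp.between_gt hyU hc
    have : Phi' U g a ≤ g u := phi'_le hyp hu h1
    have : g u < g (h b) := hyp.mono hu hyU h2
    linarith [this, hgy, ‹Phi' U g a ≤ g u›]

lemma phi_approach (hyp : Hyp U V g h) (ha : a ∉ U) (hne : ∃ x ∈ U, x < a) :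
    ∀ ε > 0, ∃ v ∈ V, Phi U g a - ε < v ∧ v < Phi U g a := by
  intro ε hε
  have hsne : (g '' {x | x ∈ U ∧ x < a}).Nonempty := by
    obtain ⟨x, hx, hxa⟩ := hne; exact ⟨g x, x, ⟨hx, hxa⟩, rfl⟩
  obtain ⟨v, hv, hv2⟩ := exists_lt_of_lt_csSup hsne (by linarith : Phi U g a - ε < Phi U g a)
  obtain ⟨x, ⟨hx, hxa⟩, rfl⟩ := hv
  refine ⟨g x, hyp.maps x hx, hv2, ?_⟩
  have h1 : g x ≤ Phi U g a := le_phi hyp hx hxa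
  have h2 : g x ≠ Phi U g a := fun e => (phi_notmem hyp ha hne) (e ▸ hyp.maps x hx)
  exact lt_of_le_of_ne h1 h2

lemma phi'_approach (hyp : Hyp U V g h) (ha : a ∉ U) :
    ∀ ε > 0, ∃ v ∈ V, Phi' U g a < v ∧ v < Phi' U g a + ε := by
  intro ε hε
  obtain ⟨v, hv, hv2⟩ := exists_lt_of_csInf_lt (hyp.upperNe a)
    (by linarith : Phi' U g a < Phi' U g a + ε)
  obtain ⟨x, ⟨hx, hxa⟩, rfl⟩ := hv
  refine ⟨g x, hyp.maps x hx, ?_, hv2⟩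
  have h1 : Phi' U g a ≤ g x := phi'_le hyp hx hxa
  have h2 : Phi' U g a ≠ g x := fun e => (phi'_notmem hyp ha) (e ▸ hyp.maps x hx)
  exact lt_of_le_of_ne h1 h2

lemma psi_phi (hyp : Hyp U V g h) (ha : a ∉ U)
    (happ : ∀ ε > 0, ∃ x ∈ U, a - ε < x ∧ x < a) : Phi V h (Phi U g a) = a := by
  set b := Phi U g a with hb
  have hne : ∃ x ∈ U, x < a := by
    obtain ⟨x, hx, _, h2⟩ := happ 1 one_pos; exact ⟨x, hx, h2⟩
  have hseteq : {y | y ∈ V ∧ y < b} = g '' {x | x ∈ U ∧ x < a} := by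
    ext y
    constructor
    · rintro ⟨hyV, hyb⟩
      have hxU : h y ∈ U := hyp.mapsb y hyV
      have hgx : g (h y) = y := hyp.ri y hyV
      have hxa : h y < a := by
        rcases lt_trichotomy (h y) a with hc | hc | hc
        · exact hc
        · exfalso; rw [hc] at hxU; exact ha hxU
        · exfalso
          have : b ≤ g (h y) :=
            phi_le hyp hne (fun x hx hxlt => le_of_lt (hyp.mono hx hxU (hxlt.trans hc)))
          rw [hgx] at this; linarith
      exact ⟨h y, ⟨hxU, hxa⟩, hgx⟩
    · rintro ⟨x, ⟨hx, hxa⟩, rfl⟩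
      refine ⟨hyp.maps x hx, ?_⟩
      have h1 : g x ≤ b := le_phi hyp hx hxa
      have h2 : g x ≠ b := fun e =>
        (phi_notmem hyp ha hne) (by rw [← hb, ← e]; exact hyp.maps x hx)
      exact lt_of_le_of_ne h1 h2
  have himg : h '' {y | y ∈ V ∧ y < b} = {x | x ∈ U ∧ x < a} := by
    rw [hseteq, ← Set.image_comp]
    have : ∀ x ∈ {x | x ∈ U ∧ x < a}, (h ∘ g) x = x := by
      intro x hx; exact hyp.li x hx.1
    rw [Set.image_congr this, Set.image_id']
  show sSup (h '' {y | y ∈ V ∧ y < b}) = a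
  rw [himg]
  have hbdd : BddAbove {x | x ∈ U ∧ x < a} := ⟨a, fun x hx => le_of_lt hx.2⟩
  have hne2 : {x | x ∈ U ∧ x < a}.Nonempty := by
    obtain ⟨x, hx, hxa⟩ := hne; exact ⟨x, hx, hxa⟩
  apply le_antisymm
  · exact csSup_le hne2 (fun x hx => le_of_lt hx.2)
  · by_contra hlt
    push_neg at hlt
    obtain ⟨x, hx, h1, h2⟩ := happ (a - sSup {x | x ∈ U ∧ x < a}) (by linarith)
    have : x ≤ sSup {x | x ∈ U ∧ x < a} := le_csSup hbdd ⟨hx, h2⟩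
    linarith

lemma psi'_phi' (hyp : Hyp U V g h) (ha : a ∉ U)
    (happ : ∀ ε > 0, ∃ x ∈ U, a < x ∧ x < a + ε) : Phi' V h (Phi' U g a) = a := by
  set b := Phi' U g a with hb
  have hseteq : {y | y ∈ V ∧ b < y} = g '' {x | x ∈ U ∧ a < x} := by
    ext y
    constructor
    · rintro ⟨hyV, hyb⟩
      have hxU : h y ∈ U := hyp.mapsb y hyV
      have hgx : g (h y) = y := hyp.ri y hyV
      have hxa : a < h y := by
        rcases lt_trichotomy a (h y) with hc | hc | hc
        · exact hc
        · exfalso; rw [← hc] at hxU; exact ha hxU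
        · exfalso
          have : g (h y) ≤ b :=
            le_phi' hyp (fun x hx hxlt => le_of_lt (hyp.mono hxU hx (hc.trans hxlt)))
          rw [hgx] at this; linarith
      exact ⟨h y, ⟨hxU, hxa⟩, hgx⟩
    · rintro ⟨x, ⟨hx, hxa⟩, rfl⟩
      refine ⟨hyp.maps x hx, ?_⟩
      have h1 : b ≤ g x := phi'_le hyp hx hxa
      have h2 : b ≠ g x := fun e =>
        (phi'_notmem hyp ha) (by rw [← hb, e]; exact hyp.maps x hx)
      exact lt_of_le_of_ne h1 h2
  have himg : h '' {y | y ∈ V ∧ b < y} = {x | x ∈ U ∧ a < x} := by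
    rw [hseteq, ← Set.image_comp]
    have : ∀ x ∈ {x | x ∈ U ∧ a < x}, (h ∘ g) x = x := by
      intro x hx; exact hyp.li x hx.1
    rw [Set.image_congr this, Set.image_id']
  show sInf (h '' {y | y ∈ V ∧ b < y}) = a
  rw [himg]
  have hbdd : BddBelow {x | x ∈ U ∧ a < x} := ⟨a, fun x hx => le_of_lt hx.2⟩
  have hne2 : {x | x ∈ U ∧ a < x}.Nonempty := by
    obtain ⟨u, hu, hau⟩ := hyp.topU a; exact ⟨u, hu, hau⟩
  apply le_antisymm
  · by_contra hlt
    push_neg at hlt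
    obtain ⟨x, hx, h1, h2⟩ := happ (sInf {x | x ∈ U ∧ a < x} - a) (by linarith)
    have : sInf {x | x ∈ U ∧ a < x} ≤ x := csInf_le hbdd ⟨hx, h1⟩
    linarith
  · exact le_csInf hne2 (fun x hx => le_of_lt hx.2)

lemma phi_le_phi' (hyp : Hyp U V g h) (hne : ∃ x ∈ U, x < a) (haa : a ≤ a') :
    Phi U g a ≤ Phi' U g a' := by
  apply phi_le hyp hne
  intro x hx hxa
  apply le_phi' hyp
  intro x' hx' hax'
  exact le_of_lt (hyp.mono hx hx' (by linarith))

lemma phi_isLpt (hyp : Hyp U V g h) (hL : IsLpt U a) : IsLpt V (Phi U g a) := by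
  obtain ⟨ha, hw⟩ := hL
  have hne : ∃ x ∈ U, x < a := by
    obtain ⟨x, z, y, hx, hy, _, _, _, _, h4⟩ := hw 1 one_pos
    exact ⟨y, hy, h4⟩
  refine ⟨phi_notmem hyp ha hne, ?_⟩
  intro ε hε
  obtain ⟨v, hvV, hv1, hv2⟩ := phi_approach hyp ha hne ε hε
  set x₀ := h v with hx₀def
  have hx₀U : x₀ ∈ U := hyp.mapsb v hvV
  have hgx₀ : g x₀ = v := hyp.ri v hvV
  have hx₀a : x₀ < a := by
    rcases lt_trichotomy x₀ a with hc | hc | hc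
    · exact hc
    · exfalso; rw [hc] at hx₀U; exact ha hx₀U
    · exfalso
      have : Phi U g a ≤ g x₀ :=
        phi_le hyp hne (fun x hx hxa => le_of_lt (hyp.mono hx hx₀U (hxa.trans hc)))
      rw [hgx₀] at this; linarith
  obtain ⟨x, z, y, hx, hy, hz, h1, h2, h3, h4⟩ := hw (a - x₀) (by linarith)
  have hx₀x : x₀ < x := by linarith
  have hznel : ∃ x' ∈ U, x' < z := ⟨x, hx, h2⟩
  refine ⟨g x, Phi U g z, g y, hyp.maps x hx, hyp.maps y hy, phi_notmem hyp hz hznel, ?_, ?_, ?_, ?_⟩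
  · have : g x₀ < g x := hyp.mono hx₀U hx hx₀x
    linarith [hv1, hgx₀]
  · have h5 : g x ≤ Phi U g z := le_phi hyp hx h2
    have h6 : g x ≠ Phi U g z := fun e => (phi_notmem hyp hz hznel) (e ▸ hyp.maps x hx)
    exact lt_of_le_of_ne h5 h6
  · have h5 : Phi U g z ≤ g y :=
      phi_le hyp hznel (fun x' hx' hxz => le_of_lt (hyp.mono hx' hy (hxz.trans h3)))
    have h6 : Phi U g z ≠ g y := fun e => (phi_notmem hyp hz hznel) (e ▸ hyp.maps y hy)
    exact lt_of_le_of_ne h5 h6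
  · have h5 : g y ≤ Phi U g a := le_phi hyp hy h4
    have h6 : g y ≠ Phi U g a := fun e => (phi_notmem hyp ha hne) (e ▸ hyp.maps y hy)
    exact lt_of_le_of_ne h5 h6

lemma phi'_isRpt (hyp : Hyp U V g h) (hR : IsRpt U a) : IsRpt V (Phi' U g a) := by
  obtain ⟨ha, hw⟩ := hR
  refine ⟨phi'_notmem hyp ha, ?_⟩
  intro ε hε
  obtain ⟨v, hvV, hv1, hv2⟩ := phi'_approach hyp ha ε hε
  set x₀ := h v with hx₀def
  have hx₀U : x₀ ∈ U := hyp.mapsb v hvV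
  have hgx₀ : g x₀ = v := hyp.ri v hvV
  have hx₀a : a < x₀ := by
    rcases lt_trichotomy a x₀ with hc | hc | hc
    · exact hc
    · exfalso; rw [← hc] at hx₀U; exact ha hx₀U
    · exfalso
      have : g x₀ ≤ Phi' U g a :=
        le_phi' hyp (fun x hx hax => le_of_lt (hyp.mono hx₀U hx (hc.trans hax)))
      rw [hgx₀] at this; linarith
  obtain ⟨x, z, y, hx, hy, hz, h1, h2, h3, h4⟩ := hw (x₀ - a) (by linarith)
  have hyx₀ : y < x₀ := by linarith
  refine ⟨g x, Phi' U g z, g y, hyp.maps x hx, hyp.maps y hy, phi'_notmem hyp hz, ?_, ?_, ?_, ?_⟩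
  · have h5 : Phi' U g a ≤ g x := phi'_le hyp hx h1
    have h6 : Phi' U g a ≠ g x := fun e => (phi'_notmem hyp ha) (e ▸ hyp.maps x hx)
    exact lt_of_le_of_ne h5 h6
  · have h5 : g x ≤ Phi' U g z :=
      le_phi' hyp (fun x' hx' hzx => le_of_lt (hyp.mono hx hx' (h2.trans hzx)))
    have h6 : g x ≠ Phi' U g z := fun e => (phi'_notmem hyp hz) (e ▸ hyp.maps x hx)
    exact lt_of_le_of_ne h5 h6
  · have h5 : Phi' U g z ≤ g y := phi'_le hyp hy h3
    have h6 : Phi' U g z ≠ g y := fun e => (phi'_notmem hyp hz) (e ▸ hyp.maps y hy)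
    exact lt_of_le_of_ne h5 h6
  · have : g y < g x₀ := hyp.mono hy hx₀U hyx₀
    linarith [hv2, hgx₀]






lemma US_block_pts (S : ℕ → Bool) (r : ℕ) :
    ∃ u u', u ∈ US S ∧ u' ∈ US S ∧ 4*(r:ℝ) < u ∧ u < u' ∧ u' < 4*r+1 := by
  obtain ⟨u, u', h1, h2, h3, h4, h5⟩ := block_two_points (S r) (4*r)
  exact ⟨u, u', US_mem_of_block h1, US_mem_of_block h2, h3, h4, h5⟩

lemma US_lower_pt (S : ℕ → Bool) {n : ℕ} (hn : 1 ≤ n) : ∃ x ∈ US S, x < 4*(n:ℝ) := by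
  obtain ⟨u, u', hu, _, h3, h4, h5⟩ := US_block_pts S 0
  refine ⟨u, hu, ?_⟩
  have : (1:ℝ) ≤ n := by exact_mod_cast hn
  push_cast at h5 ⊢
  linarith

lemma US_happL {S : ℕ → Bool} {n : ℕ} (hS : S n = true) :
    ∀ ε > 0, ∃ x ∈ US S, 4*(n:ℝ)+1 - ε < x ∧ x < 4*(n:ℝ)+1 := by
  intro ε hε
  obtain ⟨x, z, y, hx, hy, _, h1, h2, h3, h4⟩ := (isLpt_US_of hS).2 ε hε
  exact ⟨y, hy, by linarith, h4⟩

lemma US_happR {S : ℕ → Bool} {n : ℕ} (hS : S n = false) :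
    ∀ ε > 0, ∃ x ∈ US S, 4*(n:ℝ) < x ∧ x < 4*(n:ℝ) + ε := by
  intro ε hε
  obtain ⟨x, z, y, hx, hy, _, h1, h2, h3, h4⟩ := (isRpt_US_of hS).2 ε hε
  exact ⟨x, hx, h1, by linarith⟩

lemma nat_cast_4eq {m m' : ℕ} (h : 4*(m:ℝ)+1 = 4*(m':ℝ)) : False := by
  have : (4*m+1 : ℕ) = (4*m' : ℕ) := by exact_mod_cast h
  omega

lemma nat_cast_4eq' {m m' : ℕ} (h : 4*(m:ℝ) = 4*(m':ℝ)) : m = m' := by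
  have : (4*m : ℕ) = (4*m' : ℕ) := by exact_mod_cast h
  omega

lemma nat_cast_4eq1 {m m' : ℕ} (h : 4*(m:ℝ)+1 = 4*(m':ℝ)+1) : m = m' := by
  have : (4*m+1 : ℕ) = (4*m'+1 : ℕ) := by exact_mod_cast h
  omega

theorem US_order_rigid {S T : ℕ → Bool} (f : ↥(US S) → ↥(US T))
    (hbij : Function.Bijective f) (hmonof : StrictMono f) : S = T := by
  classical
  set e := Equiv.ofBijective f hbij with he
  set g : ℝ → ℝ := fun x => if hx : x ∈ US S then (f ⟨x, hx⟩ : ℝ) else 0 with hgdef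
  set h : ℝ → ℝ := fun y => if hy : y ∈ US T then ((e.symm ⟨y, hy⟩ : ↥(US S)) : ℝ) else 0
    with hhdef
  have hgval : ∀ (x : ℝ) (hx : x ∈ US S), g x = (f ⟨x, hx⟩ : ℝ) := by
    intro x hx; simp [hgdef, dif_pos hx]
  have hhval : ∀ (y : ℝ) (hy : y ∈ US T), h y = ((e.symm ⟨y, hy⟩ : ↥(US S)) : ℝ) := by
    intro y hy; simp [hhdef, dif_pos hy]
  have hyp : Hyp (US S) (US T) g h := by
    refine ⟨?_, ?_, ?_, ?_, ?_, US_unbdd S, US_unbdd T, US_bddBelow T, US_bddBelow S, US_open S⟩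
    · intro x hx; rw [hgval x hx]; exact (f ⟨x, hx⟩).2
    · intro y hy; rw [hhval y hy]; exact (e.symm ⟨y, hy⟩).2
    · intro x hx
      rw [hgval x hx, hhval _ (f ⟨x, hx⟩).2]
      have : (⟨(f ⟨x, hx⟩ : ℝ), (f ⟨x, hx⟩).2⟩ : ↥(US T)) = f ⟨x, hx⟩ := Subtype.ext rfl
      rw [this]
      have : e.symm (f ⟨x, hx⟩) = ⟨x, hx⟩ := by
        rw [he]; exact (Equiv.ofBijective f hbij).symm_apply_apply ⟨x, hx⟩
      rw [this]
    · intro y hy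
      rw [hhval y hy, hgval _ (e.symm ⟨y, hy⟩).2]
      have h2 : (⟨((e.symm ⟨y, hy⟩ : ↥(US S)) : ℝ), (e.symm ⟨y, hy⟩).2⟩ : ↥(US S))
          = e.symm ⟨y, hy⟩ := Subtype.ext rfl
      rw [h2]
      have h3 : f (e.symm ⟨y, hy⟩) = ⟨y, hy⟩ := by
        rw [he]
        exact (Equiv.ofBijective f hbij).apply_symm_apply ⟨y, hy⟩
      rw [h3]
    · intro x hx x' hx' hlt
      rw [hgval x hx, hgval x' hx']
      exact hmonof (Subtype.mk_lt_mk.2 hlt)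
  have hyp' : Hyp (US T) (US S) h g := hyp.symm (US_open T)
  -- anchor images
  set aS : ℕ → ℝ := fun n => if S n then 4*(n:ℝ)+1 else 4*(n:ℝ) with haS
  set p : ℕ → ℝ := fun n => if S n then Phi (US S) g (4*(n:ℝ)+1) else Phi' (US S) g (4*(n:ℝ))
    with hpdef
  have haS_t : ∀ {n}, S n = true → aS n = 4*(n:ℝ)+1 := by
    intro n hS; simp [haS, hS]
  have haS_f : ∀ {n}, S n = false → aS n = 4*(n:ℝ) := by
    intro n hS; simp [haS, hS]
  have hp_t : ∀ {n}, S n = true → p n = Phi (US S) g (4*(n:ℝ)+1) := by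
    intro n hS; simp [hpdef, hS]
  have hp_f : ∀ {n}, S n = false → p n = Phi' (US S) g (4*(n:ℝ)) := by
    intro n hS; simp [hpdef, hS]
  have hite_t : ∀ {b : Bool}, b = true → (if b then (1:ℝ) else 0) = 1 := by
    intro b hb; simp [hb]
  have hite_f : ∀ {b : Bool}, b = false → (if b then (1:ℝ) else 0) = 0 := by
    intro b hb; simp [hb]
  have hclass : ∀ n : ℕ, ∃ m : ℕ, T m = S n ∧
      p n = 4*(m:ℝ) + (if S n then 1 else 0) := by
    intro n
    cases hS : S n
    · have hR : IsRpt (US T) (Phi' (US S) g (4*(n:ℝ))) := phi'_isRpt hyp (isRpt_US_of hS)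
      obtain ⟨m, hm1, hm2⟩ := isRpt_US hR
      refine ⟨m, hm1, ?_⟩
      rw [hp_f hS, hm2]; norm_num
    · have hL : IsLpt (US T) (Phi (US S) g (4*(n:ℝ)+1)) := phi_isLpt hyp (isLpt_US_of hS)
      obtain ⟨m, hm1, hm2⟩ := isLpt_US hL
      refine ⟨m, hm1, ?_⟩
      rw [hp_t hS, hm2]; norm_num
  set k : ℕ → ℕ := fun n => (hclass n).choose with hkdef
  have hkspec : ∀ n, T (k n) = S n ∧ p n = 4*((k n):ℝ) + (if S n then 1 else 0) :=
    fun n => (hclass n).choose_spec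
  -- T-side
  set pT : ℕ → ℝ := fun m => if T m then Phi (US T) h (4*(m:ℝ)+1) else Phi' (US T) h (4*(m:ℝ))
    with hpTdef
  have hpT_t : ∀ {m}, T m = true → pT m = Phi (US T) h (4*(m:ℝ)+1) := by
    intro m hT; simp [hpTdef, hT]
  have hpT_f : ∀ {m}, T m = false → pT m = Phi' (US T) h (4*(m:ℝ)) := by
    intro m hT; simp [hpTdef, hT]
  have hclassT : ∀ m : ℕ, ∃ r : ℕ, S r = T m ∧
      pT m = 4*(r:ℝ) + (if T m then 1 else 0) := by
    intro m
    cases hT : T m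
    · have hR : IsRpt (US S) (Phi' (US T) h (4*(m:ℝ))) := phi'_isRpt hyp' (isRpt_US_of hT)
      obtain ⟨r, hr1, hr2⟩ := isRpt_US hR
      refine ⟨r, hr1, ?_⟩
      rw [hpT_f hT, hr2]; norm_num
    · have hL : IsLpt (US S) (Phi (US T) h (4*(m:ℝ)+1)) := phi_isLpt hyp' (isLpt_US_of hT)
      obtain ⟨r, hr1, hr2⟩ := isLpt_US hL
      refine ⟨r, hr1, ?_⟩
      rw [hpT_t hT, hr2]; norm_num
  set k' : ℕ → ℕ := fun m => (hclassT m).choose with hk'def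
  have hk'spec : ∀ m, S (k' m) = T m ∧ pT m = 4*((k' m):ℝ) + (if T m then 1 else 0) :=
    fun m => (hclassT m).choose_spec
  -- inverse relations
  have hk'k : ∀ n, k' (k n) = n := by
    intro n
    obtain ⟨hT1, hp1⟩ := hkspec n
    obtain ⟨hS2, hp2⟩ := hk'spec (k n)
    cases hS : S n
    · rw [hS] at hT1
      have h4kn : (4*((k n):ℝ)) = p n := by
        rw [hp1, hite_f hS]; ring
      have hthis : pT (k n) = 4*(n:ℝ) := by
        rw [hpT_f hT1, h4kn, hp_f hS]
        exact psi'_phi' hyp (US_notmem_int_mul S n) (US_happR hS)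
      rw [hp2, hite_f hT1] at hthis
      exact nat_cast_4eq' (by linarith [hthis] : 4*((k' (k n)):ℝ) = 4*(n:ℝ))
    · rw [hS] at hT1
      have h4kn : (4*((k n):ℝ)+1) = p n := by
        rw [hp1, hite_t hS]
      have hthis : pT (k n) = 4*(n:ℝ)+1 := by
        rw [hpT_t hT1, h4kn, hp_t hS]
        exact psi_phi hyp (US_notmem_int_mul_add_one S n) (US_happL hS)
      rw [hp2, hite_t hT1] at hthis
      exact nat_cast_4eq1 (by linarith [hthis] : 4*((k' (k n)):ℝ)+1 = 4*(n:ℝ)+1)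
  have hkk' : ∀ m, k (k' m) = m := by
    intro m
    obtain ⟨hS1, hp1⟩ := hk'spec m
    obtain ⟨hT2, hp2⟩ := hkspec (k' m)
    cases hT : T m
    · rw [hT] at hS1
      have h4km : (4*((k' m):ℝ)) = pT m := by
        rw [hp1, hite_f hT]; ring
      have hthis : p (k' m) = 4*(m:ℝ) := by
        rw [hp_f hS1, h4km, hpT_f hT]
        exact psi'_phi' hyp' (US_notmem_int_mul T m) (US_happR hT)
      rw [hp2, hite_f hS1] at hthis
      exact nat_cast_4eq' (by linarith [hthis] : 4*((k (k' m)):ℝ) = 4*(m:ℝ))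
    · rw [hT] at hS1
      have h4km : (4*((k' m):ℝ)+1) = pT m := by
        rw [hp1, hite_t hT]
      have hthis : p (k' m) = 4*(m:ℝ)+1 := by
        rw [hp_t hS1, h4km, hpT_t hT]
        exact psi_phi hyp' (US_notmem_int_mul_add_one T m) (US_happL hT)
      rw [hp2, hite_t hS1] at hthis
      exact nat_cast_4eq1 (by linarith [hthis] : 4*((k (k' m)):ℝ)+1 = 4*(m:ℝ)+1)
  -- monotonicity of p
  have hple : ∀ n, p n ≤ Phi' (US S) g (aS n) := by
    intro n
    cases hS : S n
    · rw [hp_f hS, haS_f hS]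
    · rw [hp_t hS, haS_t hS]
      apply phi_le_phi' hyp
      · obtain ⟨u, u', hu, _, h3, h4, h5⟩ := US_block_pts S n
        exact ⟨u, hu, by linarith⟩
      · exact le_refl _
  have hlep : ∀ n', 1 ≤ n' → Phi (US S) g (aS n') ≤ p n' := by
    intro n' hn'
    cases hS : S n'
    · rw [hp_f hS, haS_f hS]
      apply phi_le_phi' hyp
      · exact US_lower_pt S hn'
      · exact le_refl _
    · rw [hp_t hS, haS_t hS]
  have haSbound : ∀ n : ℕ, 4*(n:ℝ) ≤ aS n ∧ aS n ≤ 4*(n:ℝ)+1 := by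
    intro n
    cases hS : S n
    · rw [haS_f hS]; constructor <;> linarith
    · rw [haS_t hS]; constructor <;> linarith
  have hpmono : ∀ n n', n < n' → p n < p n' := by
    intro n n' hnn'
    by_cases hbad : S n = true ∧ n' = n + 1 ∧ S n' = false
    · -- the adjacent L-R case
      obtain ⟨hSn, hn'eq, hSn'⟩ := hbad
      have h1 : p n = Phi (US S) g (4*(n:ℝ)+1) := hp_t hSn
      have h2 : p n' = Phi' (US S) g (4*(n':ℝ)) := hp_f hSn'
      have hle : p n ≤ p n' := by
        rw [h1, h2]
        apply phi_le_phi' hyp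
        · obtain ⟨u, u', hu, _, h3, h4, h5⟩ := US_block_pts S n
          exact ⟨u, hu, by linarith⟩
        · have : (n:ℝ) + 1 ≤ n' := by exact_mod_cast Nat.succ_le_of_lt hnn'
          linarith
      rcases lt_or_eq_of_le hle with hlt | heq
      · exact hlt
      · exfalso
        obtain ⟨hT1, hp1⟩ := hkspec n
        obtain ⟨hT2, hp2⟩ := hkspec n'
        rw [hp1, hp2, hite_t hSn, hite_f hSn'] at heq
        exact nat_cast_4eq (m := k n) (m' := k n') (by linarith [heq])
    · -- there is a full block strictly between the anchors
      have hr : ∃ r : ℕ, aS n ≤ 4*(r:ℝ) ∧ 4*(r:ℝ)+1 ≤ aS n' := by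
        rcases Nat.lt_or_ge n' (n+2) with hcase | hcase
        · have hn'1 : n' = n + 1 := by omega
          have hcast : ((n':ℕ):ℝ) = (n:ℝ)+1 := by rw [hn'1]; push_cast; ring
          cases hSn : S n
          · refine ⟨n, le_of_eq (haS_f hSn), ?_⟩
            have h1 := (haSbound n').1
            rw [hcast] at h1
            linarith
          · cases hSn' : S n'
            · exact absurd ⟨hSn, hn'1, hSn'⟩ hbad
            · refine ⟨n', ?_, le_of_eq (haS_t hSn').symm⟩
              rw [haS_t hSn, hcast]
              linarith
        · have hcast2 : (n:ℝ) + 2 ≤ n' := by exact_mod_cast hcase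
          refine ⟨n+1, ?_, ?_⟩
          · have h1 := (haSbound n).2
            push_cast
            linarith
          · have h1 := (haSbound n').1
            push_cast
            linarith
      obtain ⟨r, hr1, hr2⟩ := hr
      obtain ⟨u, u', hu, hu', h3, h4, h5⟩ := US_block_pts S r
      have step1 : p n ≤ Phi' (US S) g (aS n) := hple n
      have step2 : Phi' (US S) g (aS n) ≤ g u := phi'_le hyp hu (by linarith)
      have step3 : g u < g u' := hyp.mono hu hu' h4
      have step4 : g u' ≤ Phi (US S) g (aS n') := le_phi hyp hu' (by linarith)
      have step5 : Phi (US S) g (aS n') ≤ p n' := hlep n' (by omega)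
      linarith
  -- k is strictly monotone
  have hkmono : StrictMono k := by
    intro n n' hnn'
    have hp := hpmono n n' hnn'
    obtain ⟨hT1, hp1⟩ := hkspec n
    obtain ⟨hT2, hp2⟩ := hkspec n'
    rw [hp1, hp2] at hp
    by_contra hle
    push_neg at hle
    rcases lt_or_eq_of_le hle with hlt | heq
    · -- k n' < k n
      have hc : ((k n'):ℝ) + 1 ≤ (k n : ℝ) := by exact_mod_cast Nat.succ_le_of_lt hlt
      have e0 : (0:ℝ) ≤ (if S n then (1:ℝ) else 0) := by split <;> norm_num
      have e1 : (if S n' then (1:ℝ) else 0) ≤ 1 := by split <;> norm_num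
      linarith
    · -- k n' = k n
      rw [heq] at hp
      cases hSn : S n <;> cases hSn' : S n'
      · rw [hite_f hSn, hite_f hSn'] at hp; linarith
      · rw [hSn] at hT1; rw [hSn'] at hT2; rw [heq] at hT2
        rw [hT2] at hT1; exact Bool.noConfusion hT1
      · rw [hite_t hSn, hite_f hSn'] at hp; linarith
      · rw [hite_t hSn, hite_t hSn'] at hp; linarith
  have hk'mono : StrictMono k' := by
    intro m m' hmm'
    have h1 : k (k' m) < k (k' m') → k' m < k' m' := by
      intro hh
      by_contra hle
      push_neg at hle
      rcases lt_or_eq_of_le hle with hlt | heq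
      · exact absurd (hkmono hlt) (by rw [hkk' m, hkk' m']; omega)
      · rw [heq] at hh; exact lt_irrefl _ hh
    apply h1
    rw [hkk' m, hkk' m']
    exact hmm'
  have hkid : ∀ n, k n = n := by
    intro n
    have h1 : n ≤ k n := hkmono.le_apply
    have h2 : k n ≤ k' (k n) := hk'mono.le_apply
    rw [hk'k n] at h2
    omega
  funext n
  have := (hkspec n).1
  rw [hkid n] at this
  exact this.symm


end Stmt3

open Stmt3 in
/-- There is a family of open subsets of `ℝ`, of cardinality
continuum, any two distinct members of which are metrically similar (there is a
bijection that is uniformly continuous in both directions) but not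
order-isomorphic (there is no strictly increasing bijection between them). -/
theorem stmt_3 :
    ∃ 𝓖 : Set (Set ℝ),
      Cardinal.mk 𝓖 = Cardinal.continuum ∧
      (∀ U ∈ 𝓖, IsOpen U) ∧
      (∀ U ∈ 𝓖, ∀ V ∈ 𝓖, U ≠ V →
        (∃ f : ↥U ≃ ↥V, UniformContinuous ⇑f ∧ UniformContinuous ⇑f.symm) ∧
        ¬ ∃ f : ↥U → ↥V, Function.Bijective f ∧ StrictMono f) := by
  refine ⟨Set.range US, ?_, ?_, ?_⟩
  · rw [Cardinal.mk_range_eq US US_inj]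
    have h1 : Cardinal.mk (ℕ → Bool) = (2 : Cardinal) ^ (Cardinal.aleph0) := by
      rw [← Cardinal.mk_bool, ← Cardinal.mk_nat, Cardinal.power_def]
    rw [h1, Cardinal.two_power_aleph0]
  · rintro U ⟨S, rfl⟩
    exact US_open S
  · rintro U ⟨S, rfl⟩ V ⟨T, rfl⟩ hUV
    constructor
    · exact ⟨simEquiv S T, simEquiv_uc S T, simEquiv_symm_uc S T⟩
    · rintro ⟨f, hbij, hmono⟩
      exact hUV (congrArg US (US_order_rigid f hbij hmono))

end Stmt3
end

section
/- There exists a family 𝓗 of closed subsets of ℝ with the cardinality of the continuum such that no connected component of any member of 𝓗 (as a subspace of ℝ) is a singleton, and for any two distinct A, B ∈ 𝓗 there exists a bijection f : A → B with both f and f⁻¹ uniformly continuous, but there exists no strictly increasing bijection from A onto B. -/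
open Set

namespace Stmt4

noncomputable section

def q (k : ℕ) : ℝ := (2:ℝ)⁻¹ ^ k

lemma q_pos (k : ℕ) : 0 < q k := by unfold q; positivity

lemma q_le_one (k : ℕ) : q k ≤ 1 := by
  unfold q; exact pow_le_one₀ (by norm_num) (by norm_num)

lemma q_succ (k : ℕ) : q (k+1) = q k / 2 := by
  simp [q, pow_succ]; ring

lemma q_anti {j k : ℕ} (h : j ≤ k) : q k ≤ q j := by
  unfold q
  exact pow_le_pow_of_le_one (by norm_num) (by norm_num) h

lemma exists_q_lt {ε : ℝ} (hε : 0 < ε) : ∃ k, q k < ε := by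
  obtain ⟨k, hk⟩ := exists_pow_lt_of_lt_one hε (by norm_num : (2:ℝ)⁻¹ < 1)
  exact ⟨k, hk⟩


def core : Set ℝ := Icc 0 1 ∪ ⋃ k : ℕ, Icc (-(q k)) (-(3/4 * q k))

lemma core_sub : core ⊆ Icc (-1 : ℝ) 1 := by
  rintro y (⟨h0, h1⟩ | hy)
  · constructor <;> linarith
  · simp only [mem_iUnion, mem_Icc] at hy
    obtain ⟨k, h1, h2⟩ := hy
    have := q_pos k; have := q_le_one k
    constructor <;> linarith

lemma core_gap (k : ℕ) {y : ℝ} (hy : y ∈ core) :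
    ¬(-(3/4 * q k) < y ∧ y < -(q k / 2)) := by
  rintro ⟨hg1, hg2⟩
  have hqk := q_pos k
  rcases hy with ⟨h0, h1⟩ | hy
  · linarith
  · simp only [mem_iUnion, mem_Icc] at hy
    obtain ⟨j, h1, h2⟩ := hy
    rcases le_or_gt j k with hjk | hjk
    · have := q_anti hjk; linarith
    · have : q j ≤ q (k+1) := q_anti hjk
      rw [q_succ] at this; linarith

def sg (t : Bool) : ℝ := if t then -1 else 1

lemma sg_sq (t : Bool) : sg t * sg t = 1 := by cases t <;> simp [sg]

def ctr (n : ℕ) : ℝ := 3*n+1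

def A (b : ℕ → Bool) : Set ℝ := ⋃ n, {x : ℝ | sg (b n) * (x - ctr n) ∈ core}

lemma mem_A_iff {b : ℕ → Bool} {x : ℝ} : x ∈ A b ↔ ∃ n, sg (b n) * (x - ctr n) ∈ core := by
  simp [A]

lemma abs_le_of_blk {t : Bool} {x c : ℝ} (h : sg t * (x - c) ∈ core) :
    c - 1 ≤ x ∧ x ≤ c + 1 := by
  have := core_sub h
  simp only [mem_Icc] at this
  cases t <;> simp [sg] at this <;> constructor <;> linarith [this.1, this.2]

lemma blk_bounds {b : ℕ → Bool} {n : ℕ} {x : ℝ} (h : sg (b n) * (x - ctr n) ∈ core) :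
    (3*n : ℝ) ≤ x ∧ x ≤ 3*n + 2 := by
  have := abs_le_of_blk h
  unfold ctr at this
  constructor <;> linarith [this.1, this.2]

lemma blk_unique {b : ℕ → Bool} {n m : ℕ} {x : ℝ}
    (hn : sg (b n) * (x - ctr n) ∈ core) (hm : sg (b m) * (x - ctr m) ∈ core) : n = m := by
  have h1 := blk_bounds hn
  have h2 := blk_bounds hm
  have : (n : ℝ) < m + 1 := by linarith [h1.1, h2.2]
  have : (m : ℝ) < n + 1 := by linarith [h1.2, h2.1]
  have hnm : n < m + 1 := by exact_mod_cast ‹(n:ℝ) < m + 1›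
  have hmn : m < n + 1 := by exact_mod_cast ‹(m:ℝ) < n + 1›
  omega

lemma A_nonneg {b : ℕ → Bool} {x : ℝ} (h : x ∈ A b) : 0 ≤ x := by
  rw [mem_A_iff] at h
  obtain ⟨n, hn⟩ := h
  have h1 := (blk_bounds hn).1
  have h2 : (0:ℝ) ≤ 3*n := by positivity
  linarith

/-- block localization -/
lemma blk_local {b : ℕ → Bool} {n : ℕ} {x : ℝ} (h : x ∈ A b)
    (h1 : ctr n - 1 < x) (h2 : x < ctr n + 1) : sg (b n) * (x - ctr n) ∈ core := by
  rw [mem_A_iff] at h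
  obtain ⟨m, hm⟩ := h
  have hb := blk_bounds hm
  unfold ctr at h1 h2
  have : (m : ℝ) < n + 1 := by linarith [hb.1]
  have : (n : ℝ) < m + 1 := by linarith [hb.2]
  have hnm : m = n := by
    have h3 : m < n + 1 := by exact_mod_cast ‹(m:ℝ) < n + 1›
    have h4 : n < m + 1 := by exact_mod_cast ‹(n:ℝ) < m + 1›
    omega
  rwa [hnm] at hm

lemma cross_gap {b : ℕ → Bool} {n : ℕ} {x : ℝ} (h : x ∈ A b) :
    ¬((3*n+2 : ℝ) < x ∧ x < 3*n+3) := by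
  rintro ⟨hg1, hg2⟩
  rw [mem_A_iff] at h
  obtain ⟨m, hm⟩ := h
  have hb := blk_bounds hm
  have : (n : ℝ) < m := by linarith [hb.2]
  have : (m : ℝ) < n + 1 := by linarith [hb.1]
  have h3 : n < m := by exact_mod_cast ‹(n:ℝ) < m›
  have h4 : m < n + 1 := by exact_mod_cast ‹(m:ℝ) < n + 1›
  omega

lemma mem_A_of {b : ℕ → Bool} {n : ℕ} {x : ℝ} (h : sg (b n) * (x - ctr n) ∈ core) :
    x ∈ A b := mem_A_iff.2 ⟨n, h⟩

lemma zero_mem_core : (0:ℝ) ∈ core := Or.inl ⟨le_refl 0, by norm_num⟩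

lemma mem_core_main {y : ℝ} (h0 : 0 ≤ y) (h1 : y ≤ 1) : y ∈ core := Or.inl ⟨h0, h1⟩

lemma mem_core_side (k : ℕ) {y : ℝ} (h0 : -(q k) ≤ y) (h1 : y ≤ -(3/4 * q k)) : y ∈ core :=
  Or.inr (mem_iUnion.2 ⟨k, mem_Icc.2 ⟨h0, h1⟩⟩)

lemma ctr_mem (b : ℕ → Bool) (n : ℕ) : ctr n ∈ A b :=
  mem_A_of (by rw [sub_self, mul_zero]; exact zero_mem_core)

lemma main_false {b : ℕ → Bool} {n : ℕ} (hb : b n = false) :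
    Icc (ctr n) (ctr n + 1) ⊆ A b := by
  intro u hu
  simp only [mem_Icc] at hu
  exact mem_A_of (n := n) (by
    rw [hb]; simp only [sg, if_false, Bool.false_eq_true, one_mul]
    exact mem_core_main (by linarith [hu.1]) (by linarith [hu.2]))

lemma main_true {b : ℕ → Bool} {n : ℕ} (hb : b n = true) :
    Icc (ctr n - 1) (ctr n) ⊆ A b := by
  intro u hu
  simp only [mem_Icc] at hu
  exact mem_A_of (n := n) (by
    rw [hb]; simp only [sg, if_true]
    exact mem_core_main (by linarith [hu.2]) (by linarith [hu.1]))

lemma side_false {b : ℕ → Bool} {n : ℕ} (hb : b n = false) (k : ℕ) :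
    Icc (ctr n - q k) (ctr n - 3/4 * q k) ⊆ A b := by
  intro u hu
  simp only [mem_Icc] at hu
  exact mem_A_of (n := n) (by
    rw [hb]; simp only [sg, if_false, Bool.false_eq_true, one_mul]
    exact mem_core_side k (by linarith [hu.1]) (by linarith [hu.2]))

lemma side_true {b : ℕ → Bool} {n : ℕ} (hb : b n = true) (k : ℕ) :
    Icc (ctr n + 3/4 * q k) (ctr n + q k) ⊆ A b := by
  intro u hu
  simp only [mem_Icc] at hu
  exact mem_A_of (n := n) (by
    rw [hb]; simp only [sg, if_true]
    exact mem_core_side k (by linarith [hu.2]) (by linarith [hu.1]))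

lemma top_mem (b : ℕ → Bool) (n : ℕ) : (3*n+2 : ℝ) ∈ A b := by
  cases hb : b n with
  | false =>
    apply main_false hb
    unfold ctr
    constructor
    · norm_num
    · linarith
  | true =>
    apply mem_A_of (n := n)
    rw [hb]
    simp only [sg, if_true]
    have : (-1 : ℝ) * ((3*n+2 : ℝ) - ctr n) = -(q 0) := by unfold ctr q; push_cast; ring_nf
    rw [this]
    exact mem_core_side 0 (le_refl _) (by unfold q; norm_num)

lemma bot_mem (b : ℕ → Bool) (n : ℕ) : (3*n : ℝ) ∈ A b := by
  cases hb : b n with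
  | true => exact main_true hb (by unfold ctr; constructor <;> norm_num)
  | false =>
    apply mem_A_of (n := n)
    rw [hb]
    simp only [sg, if_false, Bool.false_eq_true, one_mul]
    have : (3*n : ℝ) - ctr n = -(q 0) := by unfold ctr q; norm_num
    rw [this]
    exact mem_core_side 0 (le_refl _) (by unfold q; norm_num)

lemma gapL {b : ℕ → Bool} {n : ℕ} (hb : b n = false) (k : ℕ) {x : ℝ} (h : x ∈ A b) :
    ¬(ctr n - 3/4 * q k < x ∧ x < ctr n - q k / 2) := by
  rintro ⟨h1, h2⟩
  have hq1 := q_pos k; have hq2 := q_le_one k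
  have hc : sg (b n) * (x - ctr n) ∈ core := blk_local h (by linarith) (by linarith)
  rw [hb] at hc
  simp only [sg, if_false, Bool.false_eq_true, one_mul] at hc
  exact core_gap k hc ⟨by linarith, by linarith⟩

lemma gapR {b : ℕ → Bool} {n : ℕ} (hb : b n = true) (k : ℕ) {x : ℝ} (h : x ∈ A b) :
    ¬(ctr n + q k / 2 < x ∧ x < ctr n + 3/4 * q k) := by
  rintro ⟨h1, h2⟩
  have hq1 := q_pos k; have hq2 := q_le_one k
  have hc : sg (b n) * (x - ctr n) ∈ core := blk_local h (by linarith) (by linarith)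
  rw [hb] at hc
  simp only [sg, if_true] at hc
  exact core_gap k hc ⟨by linarith, by linarith⟩

lemma pre_gap {b : ℕ → Bool} (n : ℕ) {x : ℝ} (h : x ∈ A b) :
    ¬((3*n - 1 : ℝ) < x ∧ x < 3*n) := by
  rintro ⟨h1, h2⟩
  cases n with
  | zero => have := A_nonneg h; norm_num at h2; linarith
  | succ m =>
    refine cross_gap (n := m) h ⟨?_, ?_⟩ <;> push_cast at h1 h2 ⊢ <;> linarith

section OrderPred

variable {α : Type*} {β : Type*} [LinearOrder α] [LinearOrder β]

def IsJump (z w : α) : Prop := z < w ∧ ∀ u, ¬(z < u ∧ u < w)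

def Phi (x : α) : Prop := (∃ y, y < x) ∧ ∀ y, y < x → ∃ z w, y < z ∧ w < x ∧ IsJump z w

def Psi (x : α) : Prop := (∃ y, x < y) ∧ ∀ y, x < y → ∃ z w, x < z ∧ w < y ∧ IsJump z w

lemma IsJump.map (e : α ≃o β) {z w : α} (h : IsJump z w) : IsJump (e z) (e w) := by
  refine ⟨e.strictMono h.1, fun u hu => ?_⟩
  refine h.2 (e.symm u) ⟨?_, ?_⟩
  · have := e.symm.strictMono hu.1
    rwa [e.symm_apply_apply] at this
  · have := e.symm.strictMono hu.2
    rwa [e.symm_apply_apply] at this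

lemma Phi.map (e : α ≃o β) {x : α} (h : Phi x) : Phi (e x) := by
  obtain ⟨⟨y0, hy0⟩, h⟩ := h
  refine ⟨⟨e y0, e.strictMono hy0⟩, fun y hy => ?_⟩
  have hy' : e.symm y < x := by
    have := e.symm.strictMono hy
    rwa [e.symm_apply_apply] at this
  obtain ⟨z, w, h1, h2, h3⟩ := h _ hy'
  refine ⟨e z, e w, ?_, e.strictMono h2, h3.map e⟩
  have := e.strictMono h1
  rwa [e.apply_symm_apply] at this

lemma Psi.map (e : α ≃o β) {x : α} (h : Psi x) : Psi (e x) := by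
  obtain ⟨⟨y0, hy0⟩, h⟩ := h
  refine ⟨⟨e y0, e.strictMono hy0⟩, fun y hy => ?_⟩
  have hy' : x < e.symm y := by
    have := e.symm.strictMono hy
    rwa [e.symm_apply_apply] at this
  obtain ⟨z, w, h1, h2, h3⟩ := h _ hy'
  refine ⟨e z, e w, e.strictMono h1, ?_, h3.map e⟩
  have := e.strictMono h2
  rwa [e.apply_symm_apply] at this

end OrderPred

section NotPhi

variable {b : ℕ → Bool}

/-- if below `x` there is `y ∈ A b` such that everything in `A b` strictly between `y` and
`x` lies in an interval `[p,r] ⊆ A b`, then `¬ Phi x`. -/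
lemma not_phi (x : ↥(A b)) (y : ℝ) (hy : y ∈ A b) (hyx : y < (x:ℝ))
    (p r : ℝ) (hpr : Icc p r ⊆ A b)
    (hsub : ∀ u ∈ A b, y < u → u < (x:ℝ) → p ≤ u ∧ u ≤ r) : ¬ Phi x := by
  rintro ⟨-, h⟩
  obtain ⟨z, w, hz, hw, hzw, hno⟩ := h ⟨y, hy⟩ (by exact Subtype.mk_lt_mk.2 hyx)
  have hzx : (z:ℝ) < (x:ℝ) := lt_trans (Subtype.coe_lt_coe.2 hzw) (Subtype.coe_lt_coe.2 hw)
  have hz' := hsub z z.2 hz hzx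
  have hw' := hsub w w.2 (lt_trans hz (Subtype.coe_lt_coe.2 hzw)) (Subtype.coe_lt_coe.2 hw)
  set u : ℝ := ((z:ℝ) + (w:ℝ)) / 2 with hu
  have hzw' : (z:ℝ) < (w:ℝ) := Subtype.coe_lt_coe.2 hzw
  have hum : u ∈ A b := hpr ⟨by simp only [hu]; linarith [hz'.1], by simp only [hu]; linarith [hw'.2]⟩
  exact hno ⟨u, hum⟩ ⟨Subtype.mk_lt_mk.2 (by simp only [hu]; linarith),
    Subtype.mk_lt_mk.2 (by simp only [hu]; linarith)⟩

lemma not_psi (x : ↥(A b)) (y : ℝ) (hy : y ∈ A b) (hyx : (x:ℝ) < y)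
    (p r : ℝ) (hpr : Icc p r ⊆ A b)
    (hsub : ∀ u ∈ A b, (x:ℝ) < u → u < y → p ≤ u ∧ u ≤ r) : ¬ Psi x := by
  rintro ⟨-, h⟩
  obtain ⟨z, w, hz, hw, hzw, hno⟩ := h ⟨y, hy⟩ (by exact Subtype.mk_lt_mk.2 hyx)
  have hzw' : (z:ℝ) < (w:ℝ) := Subtype.coe_lt_coe.2 hzw
  have hwy : (w:ℝ) < y := Subtype.coe_lt_coe.2 hw
  have hz' := hsub z z.2 (Subtype.coe_lt_coe.2 hz) (lt_trans hzw' hwy)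
  have hw' := hsub w w.2 (lt_trans (Subtype.coe_lt_coe.2 hz) hzw') hwy
  set u : ℝ := ((z:ℝ) + (w:ℝ)) / 2 with hu
  have hum : u ∈ A b := hpr ⟨by simp only [hu]; linarith [hz'.1], by simp only [hu]; linarith [hw'.2]⟩
  exact hno ⟨u, hum⟩ ⟨Subtype.mk_lt_mk.2 (by simp only [hu]; linarith),
    Subtype.mk_lt_mk.2 (by simp only [hu]; linarith)⟩

end NotPhi

section Char

variable {b : ℕ → Bool}

lemma Icc_self_sub (x : ↥(A b)) : Icc (x:ℝ) (x:ℝ) ⊆ A b := by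
  intro u hu
  rw [Icc_self, mem_singleton_iff] at hu
  rw [hu]; exact x.2

lemma not_phi_bot {n : ℕ} (x : ↥(A b)) (hx : (x:ℝ) = 3*n) : ¬ Phi x := by
  cases n with
  | zero =>
    rintro ⟨⟨y, hy⟩, -⟩
    have h1 : (y:ℝ) < (x:ℝ) := Subtype.coe_lt_coe.2 hy
    have h2 := A_nonneg y.2
    rw [hx] at h1; norm_num at h1; linarith
  | succ m =>
    apply not_phi x (3*m+2) (top_mem b m) (by rw [hx]; push_cast; linarith)
      (x:ℝ) (x:ℝ) (Icc_self_sub x)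
    intro u hu h1 h2
    exfalso
    exact cross_gap (n := m) hu ⟨h1, by rw [hx] at h2; push_cast at h2 ⊢; linarith⟩

lemma phi_val (x : ↥(A b)) (h : Phi x) : ∃ n, (x:ℝ) = ctr n ∧ b n = false := by
  obtain ⟨n, hn⟩ := mem_A_iff.1 x.2
  cases hbn : b n with
  | false =>
    rw [hbn] at hn
    simp only [sg, Bool.false_eq_true, if_false, one_mul] at hn
    rcases hn with hm | hy
    · rw [mem_Icc] at hm
      rcases eq_or_lt_of_le hm.1 with heq | hlt
      · exact ⟨n, by linarith, hbn⟩
      · exfalso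
        refine not_phi x (ctr n) (ctr_mem b n) (by linarith) (ctr n) (ctr n + 1)
          (main_false hbn) (fun u hu hu1 hu2 => ⟨le_of_lt hu1, by linarith⟩) h
    · exfalso
      obtain ⟨k, hk⟩ := mem_iUnion.1 hy
      rw [mem_Icc] at hk
      have hq := q_pos k
      rcases eq_or_lt_of_le hk.1 with heq | hlt
      · -- x = ctr n - q k
        cases k with
        | zero =>
          refine not_phi_bot (n := n) x ?_ h
          unfold q at heq; norm_num at heq; unfold ctr at heq; linarith
        | succ j =>
          have hqj := q_pos j
          have hxval : (x:ℝ) = ctr n - q j / 2 := by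
            rw [q_succ] at heq; linarith
          refine not_phi x (ctr n - 3/4 * q j)
            (side_false hbn j ⟨by linarith, le_refl _⟩) (by linarith)
            (x:ℝ) (x:ℝ) (Icc_self_sub x) ?_ h
          intro u hu hu1 hu2
          exfalso
          exact gapL hbn j hu ⟨hu1, by linarith⟩
      · refine not_phi x (ctr n - q k) (side_false hbn k ⟨le_refl _, by linarith⟩)
          (by linarith) (ctr n - q k) (ctr n - 3/4 * q k) (side_false hbn k) ?_ h
        intro u hu hu1 hu2
        exact ⟨le_of_lt hu1, by linarith [hk.2]⟩
  | true =>
    exfalso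
    rw [hbn] at hn
    simp only [sg, if_true, neg_one_mul] at hn
    rcases hn with hm | hy
    · rw [mem_Icc] at hm
      rcases eq_or_lt_of_le hm.2 with heq | hlt
      · -- x = ctr n - 1 = 3n
        refine not_phi_bot (n := n) x ?_ h
        unfold ctr at heq; linarith
      · refine not_phi x (ctr n - 1)
          (main_true hbn ⟨le_refl _, by linarith [q_pos 0]⟩) (by linarith)
          (ctr n - 1) (ctr n) (main_true hbn) ?_ h
        intro u hu hu1 hu2
        exact ⟨le_of_lt hu1, by linarith⟩
    · obtain ⟨k, hk⟩ := mem_iUnion.1 hy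
      rw [mem_Icc] at hk
      have hq := q_pos k
      -- x ∈ [ctr n + 3/4 q k, ctr n + q k]
      rcases eq_or_lt_of_le hk.2 with heq | hlt
      · -- x = ctr n + 3/4 * q k
        have hxval : (x:ℝ) = ctr n + 3/4 * q k := by linarith
        have hmem : ctr n + q k / 2 ∈ A b := by
          have : ctr n + q k / 2 = ctr n + q (k+1) := by rw [q_succ]
          rw [this]
          exact side_true hbn (k+1) ⟨by linarith [q_pos (k+1)], le_refl _⟩
        refine not_phi x (ctr n + q k / 2) hmem (by linarith)
          (x:ℝ) (x:ℝ) (Icc_self_sub x) ?_ h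
        intro u hu hu1 hu2
        exfalso
        exact gapR hbn k hu ⟨hu1, by linarith⟩
      · refine not_phi x (ctr n + 3/4 * q k)
          (side_true hbn k ⟨le_refl _, by linarith⟩) (by linarith)
          (ctr n + 3/4 * q k) (ctr n + q k) (side_true hbn k) ?_ h
        intro u hu hu1 hu2
        exact ⟨le_of_lt hu1, by linarith [hk.1]⟩

lemma not_psi_top {n : ℕ} (x : ↥(A b)) (hx : (x:ℝ) = 3*n + 2) : ¬ Psi x := by
  apply not_psi x (3*(n+1)) (by
      have : ((3:ℝ)*(n+1)) = 3*(n+1 : ℕ) := by push_cast; ring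
      rw [this]; exact bot_mem b (n+1))
    (by rw [hx]; linarith) (x:ℝ) (x:ℝ) (Icc_self_sub x)
  intro u hu h1 h2
  exfalso
  exact cross_gap (n := n) hu ⟨by rw [hx] at h1; linarith, by push_cast at h2 ⊢; linarith⟩

lemma psi_val (x : ↥(A b)) (h : Psi x) : ∃ n, (x:ℝ) = ctr n ∧ b n = true := by
  obtain ⟨n, hn⟩ := mem_A_iff.1 x.2
  cases hbn : b n with
  | true =>
    rw [hbn] at hn
    simp only [sg, if_true, neg_one_mul] at hn
    rcases hn with hm | hy
    · rw [mem_Icc] at hm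
      rcases eq_or_lt_of_le hm.1 with heq | hlt
      · exact ⟨n, by linarith, hbn⟩
      · exfalso
        refine not_psi x (ctr n) (ctr_mem b n) (by linarith) (ctr n - 1) (ctr n)
          (main_true hbn) (fun u hu hu1 hu2 => ⟨by linarith, le_of_lt hu2⟩) h
    · exfalso
      obtain ⟨k, hk⟩ := mem_iUnion.1 hy
      rw [mem_Icc] at hk
      have hq := q_pos k
      -- x ∈ [ctr n + 3/4 q k, ctr n + q k]
      rcases eq_or_lt_of_le hk.1 with heq | hlt
      · -- x = ctr n + q k
        cases k with
        | zero =>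
          refine not_psi_top (n := n) x ?_ h
          unfold q at heq; norm_num at heq; unfold ctr at heq; linarith
        | succ j =>
          have hqj := q_pos j
          have hxval : (x:ℝ) = ctr n + q j / 2 := by
            rw [q_succ] at heq; linarith
          refine not_psi x (ctr n + 3/4 * q j)
            (side_true hbn j ⟨le_refl _, by linarith⟩) (by linarith)
            (x:ℝ) (x:ℝ) (Icc_self_sub x) ?_ h
          intro u hu hu1 hu2
          exfalso
          exact gapR hbn j hu ⟨by linarith, hu2⟩
      · refine not_psi x (ctr n + q k) (side_true hbn k ⟨by linarith, le_refl _⟩)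
          (by linarith) (ctr n + 3/4 * q k) (ctr n + q k) (side_true hbn k) ?_ h
        intro u hu hu1 hu2
        exact ⟨by linarith [hk.2], le_of_lt hu2⟩
  | false =>
    exfalso
    rw [hbn] at hn
    simp only [sg, Bool.false_eq_true, if_false, one_mul] at hn
    rcases hn with hm | hy
    · rw [mem_Icc] at hm
      rcases eq_or_lt_of_le hm.2 with heq | hlt
      · -- x = ctr n + 1 = 3n+2
        refine not_psi_top (n := n) x ?_ h
        unfold ctr at heq; linarith
      · refine not_psi x (ctr n + 1)
          (main_false hbn ⟨by linarith, le_refl _⟩) (by linarith)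
          (ctr n) (ctr n + 1) (main_false hbn) ?_ h
        intro u hu hu1 hu2
        exact ⟨by linarith, le_of_lt hu2⟩
    · obtain ⟨k, hk⟩ := mem_iUnion.1 hy
      rw [mem_Icc] at hk
      have hq := q_pos k
      -- x ∈ [ctr n - q k, ctr n - 3/4 q k]
      rcases eq_or_lt_of_le hk.2 with heq | hlt
      · -- x = ctr n - 3/4 q k
        have hxval : (x:ℝ) = ctr n - 3/4 * q k := by linarith
        have hmem : ctr n - q k / 2 ∈ A b := by
          have : ctr n - q k / 2 = ctr n - q (k+1) := by rw [q_succ]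
          rw [this]
          exact side_false hbn (k+1) ⟨le_refl _, by linarith [q_pos (k+1)]⟩
        refine not_psi x (ctr n - q k / 2) hmem (by linarith)
          (x:ℝ) (x:ℝ) (Icc_self_sub x) ?_ h
        intro u hu hu1 hu2
        exfalso
        exact gapL hbn k hu ⟨by linarith, hu2⟩
      · refine not_psi x (ctr n - 3/4 * q k)
          (side_false hbn k ⟨by linarith, le_refl _⟩) (by linarith)
          (ctr n - q k) (ctr n - 3/4 * q k) (side_false hbn k) ?_ h
        intro u hu hu1 hu2
        exact ⟨by linarith [hk.1], le_of_lt hu2⟩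

end Char

section Points

variable {b : ℕ → Bool}

/-- the center point of block `n` as an element of the subtype -/
def pt (b : ℕ → Bool) (n : ℕ) : ↥(A b) := ⟨ctr n, ctr_mem b n⟩

lemma ctr_lt_ctr {n m : ℕ} (h : n < m) : ctr n < ctr m := by
  unfold ctr
  have : (n:ℝ) < m := by exact_mod_cast h
  linarith

lemma ctr_inj {n m : ℕ} (h : ctr n = ctr m) : n = m := by
  unfold ctr at h
  have : (n:ℝ) = m := by linarith
  exact_mod_cast this

lemma phi_point {n : ℕ} (hbn : b n = false) : Phi (pt b n) := by
  constructor
  · refine ⟨⟨(3*n : ℝ), bot_mem b n⟩, Subtype.mk_lt_mk.2 ?_⟩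
    unfold ctr; linarith
  · rintro ⟨y, hy⟩ hlt
    have hlt' : y < ctr n := Subtype.mk_lt_mk.1 hlt
    obtain ⟨k, hk⟩ := exists_q_lt (show (0:ℝ) < ctr n - y by linarith)
    have hq := q_pos k
    refine ⟨⟨ctr n - 3/4 * q k, side_false hbn k ⟨by linarith, le_refl _⟩⟩,
      ⟨ctr n - q k / 2, by
        have : ctr n - q k / 2 = ctr n - q (k+1) := by rw [q_succ]
        rw [this]
        exact side_false hbn (k+1) ⟨le_refl _, by linarith [q_pos (k+1)]⟩⟩,
      Subtype.mk_lt_mk.2 (by linarith), Subtype.mk_lt_mk.2 (by linarith),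
      Subtype.mk_lt_mk.2 (by linarith), ?_⟩
    rintro ⟨u, hu⟩ ⟨h1, h2⟩
    exact gapL hbn k hu ⟨Subtype.mk_lt_mk.1 h1, Subtype.mk_lt_mk.1 h2⟩

lemma psi_point {n : ℕ} (hbn : b n = true) : Psi (pt b n) := by
  constructor
  · refine ⟨⟨(3*n+2 : ℝ), top_mem b n⟩, Subtype.mk_lt_mk.2 ?_⟩
    unfold ctr; linarith
  · rintro ⟨y, hy⟩ hlt
    have hlt' : ctr n < y := Subtype.mk_lt_mk.1 hlt
    obtain ⟨k, hk⟩ := exists_q_lt (show (0:ℝ) < y - ctr n by linarith)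
    have hq := q_pos k
    refine ⟨⟨ctr n + q k / 2, by
        have : ctr n + q k / 2 = ctr n + q (k+1) := by rw [q_succ]
        rw [this]
        exact side_true hbn (k+1) ⟨by linarith [q_pos (k+1)], le_refl _⟩⟩,
      ⟨ctr n + 3/4 * q k, side_true hbn k ⟨le_refl _, by linarith⟩⟩,
      Subtype.mk_lt_mk.2 (by linarith), Subtype.mk_lt_mk.2 (by linarith),
      Subtype.mk_lt_mk.2 (by linarith), ?_⟩
    rintro ⟨u, hu⟩ ⟨h1, h2⟩
    exact gapR hbn k hu ⟨Subtype.mk_lt_mk.1 h1, Subtype.mk_lt_mk.1 h2⟩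

lemma P_char (x : ↥(A b)) : (Phi x ∨ Psi x) ↔ ∃ n, (x:ℝ) = ctr n := by
  constructor
  · rintro (h | h)
    · obtain ⟨n, h1, -⟩ := phi_val x h; exact ⟨n, h1⟩
    · obtain ⟨n, h1, -⟩ := psi_val x h; exact ⟨n, h1⟩
  · rintro ⟨n, hn⟩
    have hx : x = pt b n := Subtype.ext hn
    rw [hx]
    cases hbn : b n with
    | false => exact Or.inl (phi_point hbn)
    | true => exact Or.inr (psi_point hbn)

end Points

lemma nat_strictMono_surj_id {h : ℕ → ℕ} (h1 : StrictMono h) (h2 : Function.Surjective h) :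
    ∀ n, h n = n := by
  intro n
  induction n using Nat.strong_induction_on with
  | _ n ih =>
    have hle : n ≤ h n := h1.le_apply
    obtain ⟨m, hm⟩ := h2 n
    rcases lt_trichotomy m n with hc | hc | hc
    · rw [ih m hc] at hm; omega
    · rw [hc] at hm; omega
    · have := h1 hc; omega

lemma bits_eq_of_orderIso {b c : ℕ → Bool} (e : ↥(A b) ≃o ↥(A c)) : b = c := by
  have h1 : ∀ n, ∃ m, ((e (pt b n) : ℝ)) = ctr m := by
    intro n
    apply (P_char (e (pt b n))).1
    have hP : Phi (pt b n) ∨ Psi (pt b n) := (P_char (pt b n)).2 ⟨n, rfl⟩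
    rcases hP with h | h
    · exact Or.inl (h.map e)
    · exact Or.inr (h.map e)
  choose h hh using h1
  have hmono : StrictMono h := by
    intro n m hnm
    have : pt b n < pt b m := Subtype.mk_lt_mk.2 (ctr_lt_ctr hnm)
    have := e.strictMono this
    have hlt : ctr (h n) < ctr (h m) := by
      rw [← hh n, ← hh m]; exact Subtype.coe_lt_coe.2 this
    by_contra hcon
    push_neg at hcon
    rcases eq_or_lt_of_le hcon with heq | hlt2
    · rw [heq] at hlt; exact lt_irrefl _ hlt
    · exact absurd (ctr_lt_ctr hlt2) (by simp; exact le_of_lt hlt)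
  have hsurj : Function.Surjective h := by
    intro m
    have hP : Phi (pt c m) ∨ Psi (pt c m) := (P_char (pt c m)).2 ⟨m, rfl⟩
    have hP' : Phi (e.symm (pt c m)) ∨ Psi (e.symm (pt c m)) := by
      rcases hP with hp | hp
      · have := hp.map e.symm; exact Or.inl this
      · have := hp.map e.symm; exact Or.inr this
    obtain ⟨n, hn⟩ := (P_char _).1 hP'
    refine ⟨n, ?_⟩
    have hx : e.symm (pt c m) = pt b n := Subtype.ext hn
    have : e (pt b n) = pt c m := by rw [← hx, e.apply_symm_apply]
    have hval : ctr (h n) = ctr m := by rw [← hh n, this]; rfl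
    exact ctr_inj hval
  have hid := nat_strictMono_surj_id hmono hsurj
  have hept : ∀ n, e (pt b n) = pt c n := by
    intro n
    apply Subtype.ext
    rw [hh n, hid n]; rfl
  funext n
  cases hbn : b n with
  | false =>
    have := (phi_point (b := b) hbn).map e
    rw [hept n] at this
    obtain ⟨m, hm1, hm2⟩ := phi_val _ this
    have : n = m := ctr_inj hm1
    subst this
    exact hm2.symm
  | true =>
    have := (psi_point (b := b) hbn).map e
    rw [hept n] at this
    obtain ⟨m, hm1, hm2⟩ := psi_val _ this
    have : n = m := ctr_inj hm1
    subst this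
    exact hm2.symm

section Closed

lemma core_eq : core = Icc (-1 : ℝ) 1 \ ⋃ k, Ioo (-(3/4 * q k)) (-(q k / 2)) := by
  ext y
  constructor
  · intro hy
    refine ⟨core_sub hy, ?_⟩
    intro hg
    obtain ⟨k, hk⟩ := mem_iUnion.1 hg
    rw [mem_Ioo] at hk
    exact core_gap k hy hk
  · rintro ⟨⟨h1, h2⟩, hg⟩
    rcases le_or_gt 0 y with h0 | h0
    · exact mem_core_main h0 h2
    · have hex : ∃ k, q k < -y := exists_q_lt (by linarith)
      have hn0 : ¬ q 0 < -y := by unfold q; norm_num; linarith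
      have hk0 : Nat.find hex ≠ 0 := fun hc => hn0 (hc ▸ Nat.find_spec hex)
      obtain ⟨k, hk⟩ : ∃ k, Nat.find hex = k + 1 := ⟨Nat.find hex - 1, by omega⟩
      have hspec : q (k+1) < -y := hk ▸ Nat.find_spec hex
      have hpre : ¬ q k < -y := Nat.find_min hex (by omega)
      push_neg at hpre
      rcases le_or_gt y (-(3/4 * q k)) with hc | hc
      · exact mem_core_side k (by linarith) hc
      · exfalso
        refine hg (mem_iUnion.2 ⟨k, mem_Ioo.2 ⟨hc, ?_⟩⟩)
        rw [q_succ] at hspec; linarith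

lemma core_closed : IsClosed core := by
  rw [core_eq, diff_eq]
  exact isClosed_Icc.inter (isOpen_iUnion (fun k => isOpen_Ioo)).isClosed_compl

lemma A_closed (b : ℕ → Bool) : IsClosed (A b) := by
  apply LocallyFinite.isClosed_iUnion
  · intro x
    refine ⟨Ioo (x-1) (x+1), isOpen_Ioo.mem_nhds (by constructor <;> linarith), ?_⟩
    apply Set.Finite.subset (Set.finite_Iic (⌈x+1⌉₊))
    rintro n ⟨u, hu1, hu2⟩
    simp only [mem_Iic]
    have hb := blk_bounds hu1
    rw [mem_Ioo] at hu2
    have h1 : (3*n : ℝ) ≤ x + 1 := by linarith [hb.1, hu2.2]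
    have h2 : (n : ℝ) ≤ x + 1 := by
      have : (0:ℝ) ≤ n := Nat.cast_nonneg n
      linarith
    have h3 : (n : ℝ) ≤ (⌈x+1⌉₊ : ℝ) := le_trans h2 (Nat.le_ceil _)
    exact_mod_cast h3
  · intro n
    exact core_closed.preimage (by fun_prop)

lemma exists_interval {b : ℕ → Bool} {x : ℝ} (hx : x ∈ A b) :
    ∃ p r : ℝ, p < r ∧ x ∈ Icc p r ∧ Icc p r ⊆ A b := by
  obtain ⟨n, hn⟩ := mem_A_iff.1 hx
  cases hbn : b n with
  | false =>
    rw [hbn] at hn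
    simp only [sg, Bool.false_eq_true, if_false, one_mul] at hn
    rcases hn with hm | hy
    · rw [mem_Icc] at hm
      exact ⟨ctr n, ctr n + 1, by linarith, ⟨by linarith [hm.1], by linarith [hm.2]⟩,
        main_false hbn⟩
    · obtain ⟨k, hk⟩ := mem_iUnion.1 hy
      rw [mem_Icc] at hk
      have hq := q_pos k
      exact ⟨ctr n - q k, ctr n - 3/4 * q k, by linarith,
        ⟨by linarith [hk.1], by linarith [hk.2]⟩, side_false hbn k⟩
  | true =>
    rw [hbn] at hn
    simp only [sg, if_true, neg_one_mul] at hn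
    rcases hn with hm | hy
    · rw [mem_Icc] at hm
      exact ⟨ctr n - 1, ctr n, by linarith, ⟨by linarith [hm.2], by linarith [hm.1]⟩,
        main_true hbn⟩
    · obtain ⟨k, hk⟩ := mem_iUnion.1 hy
      rw [mem_Icc] at hk
      have hq := q_pos k
      exact ⟨ctr n + 3/4 * q k, ctr n + q k, by linarith,
        ⟨by linarith [hk.2], by linarith [hk.1]⟩, side_true hbn k⟩

lemma comp_nontrivial (b : ℕ → Bool) (x : ↥(A b)) : (connectedComponent x).Nontrivial := by
  obtain ⟨p, r, hpr, hxm, hsub⟩ := exists_interval x.2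
  set S : Set ↥(A b) := Subtype.val ⁻¹' (Icc p r) with hS
  have himg : Subtype.val '' S = Icc p r := by
    rw [hS, image_preimage_eq_inter_range, Subtype.range_coe,
      inter_eq_self_of_subset_left hsub]
  have hpc : IsPreconnected S :=
    (Topology.IsInducing.subtypeVal.isPreconnected_image).1
      (by rw [himg]; exact isPreconnected_Icc)
  have hsc : S ⊆ connectedComponent x := hpc.subset_connectedComponent hxm
  refine ⟨⟨p, hsub ⟨le_refl p, le_of_lt hpr⟩⟩, hsc ⟨le_refl p, le_of_lt hpr⟩,
    ⟨r, hsub ⟨le_of_lt hpr, le_refl r⟩⟩, hsc ⟨le_of_lt hpr, le_refl r⟩, ?_⟩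
  intro hc
  rw [Subtype.mk_eq_mk] at hc
  exact absurd hc (ne_of_lt hpr)

end Closed

section Sim

def idx (x : ℝ) : ℕ := (⌊x / 3⌋).toNat

lemma idx_eq {b : ℕ → Bool} {n : ℕ} {x : ℝ} (h : sg (b n) * (x - ctr n) ∈ core) :
    idx x = n := by
  have hb := blk_bounds h
  have hfl : ⌊x / 3⌋ = (n : ℤ) := by
    rw [Int.floor_eq_iff]
    constructor
    · push_cast; linarith [hb.1]
    · push_cast; linarith [hb.2]
  unfold idx
  rw [hfl]
  exact Int.toNat_natCast n

def F (b c : ℕ → Bool) (x : ℝ) : ℝ :=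
  ctr (idx x) + (sg (b (idx x)) * sg (c (idx x))) * (x - ctr (idx x))

lemma F_spec {b c : ℕ → Bool} {n : ℕ} {x : ℝ} (h : sg (b n) * (x - ctr n) ∈ core) :
    sg (c n) * (F b c x - ctr n) ∈ core := by
  unfold F
  rw [idx_eq h]
  have har : sg (c n) * (ctr n + sg (b n) * sg (c n) * (x - ctr n) - ctr n)
      = sg (b n) * (x - ctr n) := by
    cases b n <;> cases c n <;> simp [sg] <;> ring
  rw [har]
  exact h

lemma F_mem {b c : ℕ → Bool} {x : ℝ} (h : x ∈ A b) : F b c x ∈ A c := by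
  obtain ⟨n, hn⟩ := mem_A_iff.1 h
  exact mem_A_of (F_spec hn)

lemma F_invol {b c : ℕ → Bool} {x : ℝ} (h : x ∈ A b) : F c b (F b c x) = x := by
  obtain ⟨n, hn⟩ := mem_A_iff.1 h
  have h2 : sg (c n) * (F b c x - ctr n) ∈ core := F_spec hn
  set y := F b c x with hy
  have e2 : F c b y = ctr n + sg (c n) * sg (b n) * (y - ctr n) := by
    unfold F; rw [idx_eq h2]
  have e1 : y = ctr n + sg (b n) * sg (c n) * (x - ctr n) := by
    rw [hy]; unfold F; rw [idx_eq hn]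
  rw [e2, e1]
  cases b n <;> cases c n <;> simp [sg] <;> ring

lemma F_dist {b c : ℕ → Bool} {n : ℕ} {x y : ℝ} (hx : sg (b n) * (x - ctr n) ∈ core)
    (hy : sg (b n) * (y - ctr n) ∈ core) : |F b c x - F b c y| = |x - y| := by
  unfold F
  rw [idx_eq hx, idx_eq hy]
  have : ctr n + sg (b n) * sg (c n) * (x - ctr n) - (ctr n + sg (b n) * sg (c n) * (y - ctr n))
      = (sg (b n) * sg (c n)) * (x - y) := by ring
  rw [this, abs_mul]
  have : |sg (b n) * sg (c n)| = 1 := by cases b n <;> cases c n <;> norm_num [sg]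
  rw [this, one_mul]

lemma blk_far {b : ℕ → Bool} {n m : ℕ} {x y : ℝ} (hx : sg (b n) * (x - ctr n) ∈ core)
    (hy : sg (b m) * (y - ctr m) ∈ core) (hnm : n ≠ m) : 1 ≤ |x - y| := by
  have h1 := blk_bounds hx
  have h2 := blk_bounds hy
  rcases lt_or_gt_of_ne hnm with hc | hc
  · have : (n:ℝ) + 1 ≤ m := by exact_mod_cast hc
    rw [abs_sub_comm, le_abs]
    left; linarith [h1.2, h2.1]
  · have : (m:ℝ) + 1 ≤ n := by exact_mod_cast hc
    rw [le_abs]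
    left; linarith [h1.1, h2.2]

def simEquiv (b c : ℕ → Bool) : ↥(A b) ≃ ↥(A c) where
  toFun x := ⟨F b c x, F_mem x.2⟩
  invFun y := ⟨F c b y, F_mem y.2⟩
  left_inv x := Subtype.ext (F_invol x.2)
  right_inv y := Subtype.ext (F_invol y.2)

lemma simEquiv_uc (b c : ℕ → Bool) : UniformContinuous ⇑(simEquiv b c) := by
  rw [Metric.uniformContinuous_iff]
  intro ε hε
  refine ⟨min 1 ε, by positivity, ?_⟩
  intro u v huv
  obtain ⟨n, hn⟩ := mem_A_iff.1 u.2
  obtain ⟨m, hm⟩ := mem_A_iff.1 v.2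
  rw [Subtype.dist_eq, Real.dist_eq] at huv ⊢
  show |F b c u - F b c v| < ε
  rcases eq_or_ne n m with hc | hc
  · rw [hc] at hn
    rw [F_dist hn hm]
    exact lt_of_lt_of_le huv (min_le_right 1 ε)
  · exact absurd (lt_of_le_of_lt (blk_far hn hm hc) huv)
      (by simp only [not_lt]; exact min_le_left 1 ε)

lemma simEquiv_symm_uc (b c : ℕ → Bool) : UniformContinuous ⇑(simEquiv b c).symm :=
  simEquiv_uc c b

end Sim

lemma A_inj : Function.Injective A := by
  intro b c h
  funext n
  have key : ∀ d : ℕ → Bool, (ctr n + 3/5 ∈ A d) ↔ d n = false := by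
    intro d
    constructor
    · intro hm
      have hc : sg (d n) * (ctr n + 3/5 - ctr n) ∈ core := by
        apply blk_local hm <;> linarith
      cases hdn : d n with
      | false => rfl
      | true =>
        exfalso
        rw [hdn] at hc
        simp only [sg, if_true, neg_one_mul] at hc
        have hc' : (-(3/5) : ℝ) ∈ core := by
          have e : ctr n + 3/5 - ctr n = (3/5 : ℝ) := by ring
          rw [e] at hc
          simpa using hc
        rcases hc' with hm' | hy
        · rw [mem_Icc] at hm'; linarith [hm'.1]
        · obtain ⟨k, hk⟩ := mem_iUnion.1 hy
          rw [mem_Icc] at hk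
          cases k with
          | zero => unfold q at hk; norm_num at hk
          | succ j =>
            have : q (j+1) ≤ q 1 := q_anti (by omega)
            have hq1 : q 1 = 1/2 := by unfold q; norm_num
            linarith [hk.1]
    · intro hdn
      apply mem_A_of (n := n)
      rw [hdn]
      simp only [sg, Bool.false_eq_true, if_false, one_mul]
      have : ctr n + 3/5 - ctr n = 3/5 := by ring
      rw [this]
      exact mem_core_main (by norm_num) (by norm_num)
  have h1 := key b
  have h2 := key c
  rw [h] at h1
  have hbc : (b n = false) ↔ (c n = false) := by rw [← h1, h2]
  cases hbn : b n <;> cases hcn : c n <;> simp_all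

theorem main :
    ∃ 𝓗 : Set (Set ℝ),
      Cardinal.mk 𝓗 = Cardinal.continuum ∧
      (∀ A ∈ 𝓗, IsClosed A) ∧
      (∀ A ∈ 𝓗, ∀ x : ↥A, (connectedComponent x).Nontrivial) ∧
      (∀ A ∈ 𝓗, ∀ B ∈ 𝓗, A ≠ B →
        (∃ f : ↥A ≃ ↥B, UniformContinuous ⇑f ∧ UniformContinuous ⇑f.symm) ∧
        ¬ ∃ f : ↥A → ↥B, Function.Bijective f ∧ StrictMono f) := by
  refine ⟨Set.range A, ?_, ?_, ?_, ?_⟩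
  · rw [Cardinal.mk_range_eq _ A_inj, Cardinal.mk_arrow]
    simp [Cardinal.mk_bool]
  · rintro X ⟨b, rfl⟩
    exact A_closed b
  · rintro X ⟨b, rfl⟩ x
    exact comp_nontrivial b x
  · rintro X ⟨b, rfl⟩ Y ⟨c, rfl⟩ hne
    constructor
    · exact ⟨simEquiv b c, simEquiv_uc b c, simEquiv_symm_uc b c⟩
    · rintro ⟨f, hbij, hmono⟩
      have e : ↥(A b) ≃o ↥(A c) := hmono.orderIsoOfSurjective f hbij.2
      exact hne (congrArg A (bits_eq_of_orderIso e))

end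

end Stmt4

/-- There is a family of closed subsets of `ℝ`, of cardinality
continuum, whose members have no singleton connected components, and any two
distinct members of which are metrically similar but not order-isomorphic. -/
theorem stmt_4 :
    ∃ 𝓗 : Set (Set ℝ),
      Cardinal.mk 𝓗 = Cardinal.continuum ∧
      (∀ A ∈ 𝓗, IsClosed A) ∧
      (∀ A ∈ 𝓗, ∀ x : ↥A, (connectedComponent x).Nontrivial) ∧
      (∀ A ∈ 𝓗, ∀ B ∈ 𝓗, A ≠ B →
        (∃ f : ↥A ≃ ↥B, UniformContinuous ⇑f ∧ UniformContinuous ⇑f.symm) ∧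
        ¬ ∃ f : ↥A → ↥B, Function.Bijective f ∧ StrictMono f) :=
  Stmt4.main
end
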